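/- arXiv:0905.2914 — 5 statements merged into one kernel-verified Lean document; each statement's English description precedes it below -/
import Mathlib

section
/- Let φ ∈ C¹((0,∞); ℝ) and F > 0. Then for every u ∈ 𝒰, E_qce'(y_F)[u] = (ε/2) φ'(2F) (u'_{−K−1} − u'_{−K+1} − u'_K + u'_{K+2}) = −φ'(2F) ⟨ĝ', u'⟩. In particular, if φ'(2F) ≠ 0 then y_F is not a critical point of E_qce. -/
open Finset Real

noncomputable section

/-- The index set `{-N+1, ..., N}` of one period. -/
def idx (N : ℕ) : Finset ℤ := Finset.Icc (-(N : ℤ) + 1) (N : ℤ)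

/-- The space 𝒰 of 2N-periodic displacements with zero mean. -/
def uSet (N : ℕ) : Set (ℤ → ℝ) :=
  {u | (∀ ℓ : ℤ, u (ℓ + 2 * (N : ℤ)) = u ℓ) ∧ ∑ ℓ ∈ idx N, u ℓ = 0}

/-- Backward difference `v'_ℓ = ε⁻¹ (v_ℓ - v_{ℓ-1})`, with `ε = 1/N`. -/
def bD (N : ℕ) (v : ℤ → ℝ) (ℓ : ℤ) : ℝ := (N : ℝ) * (v ℓ - v (ℓ - 1))

/-- Centered second difference `v''_ℓ = ε⁻² (v_{ℓ+1} - 2 v_ℓ + v_{ℓ-1})`. -/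
def cD2 (N : ℕ) (v : ℤ → ℝ) (ℓ : ℤ) : ℝ := (N : ℝ) ^ 2 * (v (ℓ + 1) - 2 * v ℓ + v (ℓ - 1))

/-- Weighted ℓ²-norm. -/
def nl2 (N : ℕ) (v : ℤ → ℝ) : ℝ := Real.sqrt ((N : ℝ)⁻¹ * ∑ ℓ ∈ idx N, (v ℓ) ^ 2)

/-- Weighted ℓ¹-norm. -/
def nl1 (N : ℕ) (v : ℤ → ℝ) : ℝ := (N : ℝ)⁻¹ * ∑ ℓ ∈ idx N, |v ℓ|

/-- ℓ∞-norm over one period. -/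
def nlinf (N : ℕ) (v : ℤ → ℝ) : ℝ := ⨆ ℓ : {ℓ : ℤ // ℓ ∈ idx N}, |v ℓ.1|

/-- Weighted ℓ²-inner product. -/
def iprod (N : ℕ) (u v : ℤ → ℝ) : ℝ := (N : ℝ)⁻¹ * ∑ ℓ ∈ idx N, u ℓ * v ℓ

/-- The uniform deformation `(y_F)_ℓ = F ℓ ε`. -/
def yF (N : ℕ) (F : ℝ) : ℤ → ℝ := fun ℓ => F * (ℓ : ℝ) * (N : ℝ)⁻¹

/-- First variation `E'(y)[u]`. -/
def dE (E : (ℤ → ℝ) → ℝ) (y u : ℤ → ℝ) : ℝ := deriv (fun t : ℝ => E (y + t • u)) 0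

/-- Second variation `E''(y)[u,v]`. -/
def d2E (E : (ℤ → ℝ) → ℝ) (y u v : ℤ → ℝ) : ℝ :=
  deriv (fun s : ℝ => deriv (fun t : ℝ => E (y + s • u + t • v)) 0) 0

/-- The atomistic energy. -/
def Ea (N : ℕ) (φ : ℝ → ℝ) (y : ℤ → ℝ) : ℝ :=
  (N : ℝ)⁻¹ * ∑ ℓ ∈ idx N, (φ (bD N y ℓ) + φ (bD N y ℓ + bD N y (ℓ + 1)))

/-- The local QC (continuum) energy. -/
def Eqcl (N : ℕ) (φ : ℝ → ℝ) (y : ℤ → ℝ) : ℝ :=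
  (N : ℝ)⁻¹ * ∑ ℓ ∈ idx N, (φ (bD N y ℓ) + φ (2 * bD N y ℓ))

/-- The QNL atomistic region `{-K-1, ..., K+1}`. -/
def aQnl (K : ℕ) : Finset ℤ := Finset.Icc (-(K : ℤ) - 1) ((K : ℤ) + 1)

/-- The quasi-nonlocal QC energy. -/
def Eqnl (N K : ℕ) (φ : ℝ → ℝ) (y : ℤ → ℝ) : ℝ :=
  (N : ℝ)⁻¹ * ((∑ ℓ ∈ idx N, φ (bD N y ℓ))
    + (∑ ℓ ∈ aQnl K, φ (bD N y ℓ + bD N y (ℓ + 1)))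
    + ∑ ℓ ∈ idx N \ aQnl K, (φ (2 * bD N y ℓ) + φ (2 * bD N y (ℓ + 1))) / 2)

/-- The QCE atomistic region `{-K, ..., K}`. -/
def aQce (K : ℕ) : Finset ℤ := Finset.Icc (-(K : ℤ)) (K : ℤ)

/-- Atomistic energy contribution of atom ℓ. -/
def eAtom (N : ℕ) (φ : ℝ → ℝ) (y : ℤ → ℝ) (ℓ : ℤ) : ℝ :=
  (φ (bD N y ℓ) + φ (bD N y (ℓ + 1)) + φ (bD N y (ℓ - 1) + bD N y ℓ)
    + φ (bD N y (ℓ + 1) + bD N y (ℓ + 2))) / 2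

/-- Continuum energy contribution of atom ℓ. -/
def eCont (N : ℕ) (φ : ℝ → ℝ) (y : ℤ → ℝ) (ℓ : ℤ) : ℝ :=
  (φ (bD N y ℓ) + φ (bD N y (ℓ + 1)) + φ (2 * bD N y ℓ) + φ (2 * bD N y (ℓ + 1))) / 2

/-- The energy-based QC energy. -/
def Eqce (N K : ℕ) (φ : ℝ → ℝ) (y : ℤ → ℝ) : ℝ :=
  (N : ℝ)⁻¹ * ((∑ ℓ ∈ idx N \ aQce K, eCont N φ y ℓ) + ∑ ℓ ∈ aQce K, eAtom N φ y ℓ)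

/-- The prescribed backward difference `ĝ'` of the ghost-force corrector. -/
def ghatD (K : ℕ) (ℓ : ℤ) : ℝ :=
  if ℓ = -(K : ℤ) - 1 ∨ ℓ = (K : ℤ) + 2 then -(1 / 2)
  else if ℓ = -(K : ℤ) + 1 ∨ ℓ = (K : ℤ) then 1 / 2 else 0

/-- `μ_ε = 2 sin(π ε / 2) / ε` with `ε = 1/N`. -/
def muEps (N : ℕ) : ℝ := 2 * Real.sin (Real.pi * (N : ℝ)⁻¹ / 2) / (N : ℝ)⁻¹

/-- The `𝒰^{-1,∞}`-norm of a functional `T` on 𝒰. -/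
def dualNorm (N : ℕ) (T : (ℤ → ℝ) → ℝ) : ℝ :=
  sSup {r : ℝ | ∃ v ∈ uSet N, nl1 N (bD N v) = 1 ∧ r = T v}


/-! ### Auxiliary lemmas -/

lemma sum_shiftZ (f : ℤ → ℝ) (a b c : ℤ) :
    ∑ ℓ ∈ Finset.Icc a b, f (ℓ + c) = ∑ ℓ ∈ Finset.Icc (a + c) (b + c), f ℓ := by
  rw [← Finset.map_add_right_Icc, Finset.sum_map]
  rfl

lemma sum_Icc_succ_sub (f : ℤ → ℝ) (a b : ℤ) (h : a ≤ b + 1) :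
    ∑ ℓ ∈ Finset.Icc (a + 1) (b + 1), f ℓ - ∑ ℓ ∈ Finset.Icc a b, f ℓ = f (b + 1) - f a := by
  have h1 : Finset.Icc a (b + 1) = insert (b + 1) (Finset.Icc a b) := by
    ext x; simp [Finset.mem_Icc]; omega
  have h2 : Finset.Icc a (b + 1) = insert a (Finset.Icc (a + 1) (b + 1)) := by
    ext x; simp [Finset.mem_Icc]; omega
  have e1 : ∑ ℓ ∈ Finset.Icc a (b+1), f ℓ = f (b+1) + ∑ ℓ ∈ Finset.Icc a b, f ℓ := by
    rw [h1, Finset.sum_insert (by simp)]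
  have e2 : ∑ ℓ ∈ Finset.Icc a (b+1), f ℓ = f a + ∑ ℓ ∈ Finset.Icc (a+1) (b+1), f ℓ := by
    rw [h2, Finset.sum_insert (by simp)]
  linarith

lemma bD_aff (N : ℕ) (hN0 : (N : ℝ) ≠ 0) (F t : ℝ) (u : ℤ → ℝ) (ℓ : ℤ) :
    bD N (yF N F + t • u) ℓ = F + t * bD N u ℓ := by
  simp only [bD, yF, Pi.add_apply, Pi.smul_apply, smul_eq_mul]
  have h : ((ℓ - 1 : ℤ) : ℝ) = (ℓ : ℝ) - 1 := by push_cast; ring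
  rw [h]; field_simp; ring

lemma hasDerivAt_phi_aff (φ : ℝ → ℝ) {x d : ℝ} (h : HasDerivAt φ d x) (a : ℝ)
    (f : ℝ → ℝ) (hf : ∀ t, f t = x + t * a) : HasDerivAt (fun t => φ (f t)) (d * a) 0 := by
  have hfe : f = fun t => x + t * a := funext hf
  have h1 : HasDerivAt f a 0 := by
    rw [hfe]; simpa using ((hasDerivAt_id (0:ℝ)).mul_const a).const_add x
  have h0 : f 0 = x := by rw [hf]; ring
  exact (h0 ▸ h : HasDerivAt φ d (f 0)).comp 0 h1

lemma hasDerivAt_eCont (N : ℕ) (hN0 : (N : ℝ) ≠ 0) (φ : ℝ → ℝ) (F : ℝ) {dF d2 : ℝ}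
    (hφF : HasDerivAt φ dF F) (hφ2 : HasDerivAt φ d2 (2 * F)) (u : ℤ → ℝ) (ℓ : ℤ) :
    HasDerivAt (fun t : ℝ => eCont N φ (yF N F + t • u) ℓ)
      ((dF * bD N u ℓ + dF * bD N u (ℓ + 1) + d2 * (2 * bD N u ℓ)
        + d2 * (2 * bD N u (ℓ + 1))) / 2) 0 := by
  simp only [eCont]
  exact ((((hasDerivAt_phi_aff φ hφF (bD N u ℓ) _ (fun t => bD_aff N hN0 F t u ℓ)).add
    (hasDerivAt_phi_aff φ hφF (bD N u (ℓ+1)) _ (fun t => bD_aff N hN0 F t u (ℓ+1)))).add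
    (hasDerivAt_phi_aff φ hφ2 (2 * bD N u ℓ) _
      (fun t => by rw [bD_aff N hN0 F t u ℓ]; ring))).add
    (hasDerivAt_phi_aff φ hφ2 (2 * bD N u (ℓ+1)) _
      (fun t => by rw [bD_aff N hN0 F t u (ℓ+1)]; ring))).div_const 2

lemma hasDerivAt_eAtom (N : ℕ) (hN0 : (N : ℝ) ≠ 0) (φ : ℝ → ℝ) (F : ℝ) {dF d2 : ℝ}
    (hφF : HasDerivAt φ dF F) (hφ2 : HasDerivAt φ d2 (2 * F)) (u : ℤ → ℝ) (ℓ : ℤ) :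
    HasDerivAt (fun t : ℝ => eAtom N φ (yF N F + t • u) ℓ)
      ((dF * bD N u ℓ + dF * bD N u (ℓ + 1) + d2 * (bD N u (ℓ - 1) + bD N u ℓ)
        + d2 * (bD N u (ℓ + 1) + bD N u (ℓ + 2))) / 2) 0 := by
  simp only [eAtom]
  exact ((((hasDerivAt_phi_aff φ hφF (bD N u ℓ) _ (fun t => bD_aff N hN0 F t u ℓ)).add
    (hasDerivAt_phi_aff φ hφF (bD N u (ℓ+1)) _ (fun t => bD_aff N hN0 F t u (ℓ+1)))).add
    (hasDerivAt_phi_aff φ hφ2 (bD N u (ℓ-1) + bD N u ℓ) _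
      (fun t => by rw [bD_aff N hN0 F t u (ℓ-1), bD_aff N hN0 F t u ℓ]; ring))).add
    (hasDerivAt_phi_aff φ hφ2 (bD N u (ℓ+1) + bD N u (ℓ+2)) _
      (fun t => by rw [bD_aff N hN0 F t u (ℓ+1), bD_aff N hN0 F t u (ℓ+2)]; ring))).div_const 2

/-- periodicity of `bD` -/
lemma bD_periodic (N : ℕ) (u : ℤ → ℝ) (hu : ∀ ℓ : ℤ, u (ℓ + 2 * (N : ℤ)) = u ℓ) (ℓ : ℤ) :
    bD N u (ℓ + 2 * (N : ℤ)) = bD N u ℓ := by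
  simp only [bD]
  rw [hu ℓ, show ℓ + 2*(N:ℤ) - 1 = (ℓ - 1) + 2*(N:ℤ) by ring, hu (ℓ - 1)]

/-- sum of `bD u` over one period vanishes -/
lemma sum_bD_zero (N : ℕ) (hN : 2 ≤ N) (u : ℤ → ℝ) (hu : ∀ ℓ : ℤ, u (ℓ + 2 * (N : ℤ)) = u ℓ) :
    ∑ ℓ ∈ idx N, bD N u ℓ = 0 := by
  have hs : ∑ ℓ ∈ idx N, u (ℓ - 1) = ∑ ℓ ∈ Finset.Icc (-(N:ℤ)) ((N:ℤ) - 1), u ℓ := by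
    rw [show Finset.Icc (-(N:ℤ)) ((N:ℤ) - 1) = Finset.Icc (-(N:ℤ) + 1 + -1) ((N:ℤ) + -1) from
      by congr 1 <;> ring, ← sum_shiftZ, idx]
    apply Finset.sum_congr rfl; intro ℓ _; congr 1 <;> ring
  have h2 := sum_Icc_succ_sub u (-(N:ℤ)) ((N:ℤ) - 1) (by omega)
  rw [show ((N:ℤ) - 1) + 1 = (N:ℤ) by ring] at h2
  have hper : u ((N:ℤ)) = u (-(N:ℤ)) := by
    have h4 := hu (-(N:ℤ))
    rw [show -(N:ℤ) + 2 * (N:ℤ) = (N:ℤ) by ring] at h4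
    exact h4
  simp only [bD]
  rw [← Finset.mul_sum, Finset.sum_sub_distrib, hs]
  have h3 : (∑ ℓ ∈ idx N, u ℓ) - ∑ ℓ ∈ Finset.Icc (-(N:ℤ)) ((N:ℤ) - 1), u ℓ = 0 := by
    rw [idx]; linarith
  rw [h3, mul_zero]

lemma sum_bD_shift_zero (N : ℕ) (hN : 2 ≤ N) (u : ℤ → ℝ)
    (hu : ∀ ℓ : ℤ, u (ℓ + 2 * (N : ℤ)) = u ℓ) :
    ∑ ℓ ∈ idx N, bD N u (ℓ + 1) = 0 := by
  have h0 := sum_bD_zero N hN u hu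
  have h1 : ∑ ℓ ∈ idx N, bD N u (ℓ + 1)
      = ∑ ℓ ∈ Finset.Icc (-(N:ℤ) + 1 + 1) ((N:ℤ) + 1), bD N u ℓ := by
    rw [idx, sum_shiftZ]
  have h2 := sum_Icc_succ_sub (bD N u) (-(N:ℤ) + 1) (N:ℤ) (by omega)
  have hper : bD N u ((N:ℤ) + 1) = bD N u (-(N:ℤ) + 1) := by
    rw [show ((N:ℤ) + 1) = (-(N:ℤ) + 1) + 2*(N:ℤ) by ring, bD_periodic N u hu]
  rw [h1]
  rw [idx] at h0
  linarith

/-- The main first-variation formula. -/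
lemma dE_Eqce_eq (N K : ℕ) (hN : 2 ≤ N) (hK : 1 < K) (hKN : K + 3 ≤ N)
    (φ : ℝ → ℝ) (F : ℝ) {dF d2 : ℝ}
    (hφF : HasDerivAt φ dF F) (hφ2 : HasDerivAt φ d2 (2 * F))
    (u : ℤ → ℝ) (hu : ∀ ℓ : ℤ, u (ℓ + 2 * (N : ℤ)) = u ℓ) :
    dE (Eqce N K φ) (yF N F) u
      = (N : ℝ)⁻¹ / 2 * d2 *
        (bD N u (-(K : ℤ) - 1) - bD N u (-(K : ℤ) + 1)
          - bD N u (K : ℤ) + bD N u ((K : ℤ) + 2)) := by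
  have hN0 : (N : ℝ) ≠ 0 := Nat.cast_ne_zero.mpr (by omega)
  set c : ℤ → ℝ := bD N u with hc
  set gC : ℤ → ℝ := fun ℓ => (dF * c ℓ + dF * c (ℓ + 1) + d2 * (2 * c ℓ)
    + d2 * (2 * c (ℓ + 1))) / 2 with hgC
  set gA : ℤ → ℝ := fun ℓ => (dF * c ℓ + dF * c (ℓ + 1) + d2 * (c (ℓ - 1) + c ℓ)
    + d2 * (c (ℓ + 1) + c (ℓ + 2))) / 2 with hgA
  have hD : HasDerivAt (fun t : ℝ => Eqce N K φ (yF N F + t • u))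
      ((N : ℝ)⁻¹ * ((∑ ℓ ∈ idx N \ aQce K, gC ℓ) + ∑ ℓ ∈ aQce K, gA ℓ)) 0 := by
    simp only [Eqce]
    exact ((HasDerivAt.fun_sum fun ℓ _ => hasDerivAt_eCont N hN0 φ F hφF hφ2 u ℓ).add
      (HasDerivAt.fun_sum fun ℓ _ => hasDerivAt_eAtom N hN0 φ F hφF hφ2 u ℓ)).const_mul _
  rw [dE, hD.deriv]
  -- now the combinatorial identity
  have hsub : aQce K ⊆ idx N := by
    intro x hx
    simp only [aQce, idx, Finset.mem_Icc] at *
    omega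
  rw [Finset.sum_sdiff_eq_sub hsub]
  have hSc : ∑ ℓ ∈ idx N, c ℓ = 0 := sum_bD_zero N hN u hu
  have hSc1 : ∑ ℓ ∈ idx N, c (ℓ + 1) = 0 := sum_bD_shift_zero N hN u hu
  have h1 : ∑ ℓ ∈ idx N, gC ℓ = 0 := by
    have : ∑ ℓ ∈ idx N, gC ℓ = ∑ ℓ ∈ idx N, ((dF + 2 * d2) / 2 * c ℓ
        + (dF + 2 * d2) / 2 * c (ℓ + 1)) := by
      apply Finset.sum_congr rfl; intro ℓ _; simp only [hgC]; ring
    rw [this, Finset.sum_add_distrib, ← Finset.mul_sum, ← Finset.mul_sum, hSc, hSc1]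
    ring
  have hT1 : ∑ ℓ ∈ aQce K, c (ℓ - 1) - ∑ ℓ ∈ aQce K, c ℓ = c (-(K:ℤ) - 1) - c (K:ℤ) := by
    have hs : ∑ ℓ ∈ aQce K, c (ℓ - 1) = ∑ ℓ ∈ Finset.Icc (-(K:ℤ) + (-1)) ((K:ℤ) + (-1)), c ℓ := by
      rw [aQce, ← sum_shiftZ]
      apply Finset.sum_congr rfl; intro ℓ _; congr 1 <;> ring
    have h2 := sum_Icc_succ_sub c (-(K:ℤ) + (-1)) ((K:ℤ) + (-1)) (by omega)
    rw [show (-(K:ℤ) + (-1)) + 1 = -(K:ℤ) by ring, show ((K:ℤ) + (-1)) + 1 = (K:ℤ) by ring] at h2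
    rw [hs, aQce]
    rw [show (-(K:ℤ) + (-1)) = -(K:ℤ) - 1 by ring] at h2 ⊢
    linarith
  have hT2 : ∑ ℓ ∈ aQce K, c (ℓ + 2) - ∑ ℓ ∈ aQce K, c (ℓ + 1)
      = c ((K:ℤ) + 2) - c (-(K:ℤ) + 1) := by
    have hs1 : ∑ ℓ ∈ aQce K, c (ℓ + 1) = ∑ ℓ ∈ Finset.Icc (-(K:ℤ) + 1) ((K:ℤ) + 1), c ℓ := by
      rw [aQce, sum_shiftZ]
    have hs2 : ∑ ℓ ∈ aQce K, c (ℓ + 2) = ∑ ℓ ∈ Finset.Icc (-(K:ℤ) + 1 + 1) ((K:ℤ) + 1 + 1), c ℓ := by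
      rw [aQce, sum_shiftZ]; congr 1 <;> ring_nf
    have h2 := sum_Icc_succ_sub c (-(K:ℤ) + 1) ((K:ℤ) + 1) (by omega)
    rw [hs1, hs2]
    rw [show (K:ℤ) + 1 + 1 = (K:ℤ) + 2 by ring] at h2 ⊢
    linarith
  have h2 : ∑ ℓ ∈ aQce K, gA ℓ - ∑ ℓ ∈ aQce K, gC ℓ
      = d2 / 2 * ((c (-(K:ℤ) - 1) - c (K:ℤ)) + (c ((K:ℤ) + 2) - c (-(K:ℤ) + 1))) := by
    rw [← Finset.sum_sub_distrib]
    have : ∑ ℓ ∈ aQce K, (gA ℓ - gC ℓ)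
        = ∑ ℓ ∈ aQce K, (d2 / 2 * (c (ℓ - 1)) - d2 / 2 * c ℓ
          + (d2 / 2 * c (ℓ + 2) - d2 / 2 * c (ℓ + 1))) := by
      apply Finset.sum_congr rfl; intro ℓ _; simp only [hgA, hgC]; ring
    rw [this, Finset.sum_add_distrib, Finset.sum_sub_distrib, Finset.sum_sub_distrib,
      ← Finset.mul_sum, ← Finset.mul_sum, ← Finset.mul_sum, ← Finset.mul_sum]
    rw [show d2/2 * (∑ ℓ ∈ aQce K, c (ℓ-1)) - d2/2 * (∑ ℓ ∈ aQce K, c ℓ)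
        = d2/2 * ((∑ ℓ ∈ aQce K, c (ℓ-1)) - ∑ ℓ ∈ aQce K, c ℓ) by ring,
      show d2/2 * (∑ ℓ ∈ aQce K, c (ℓ+2)) - d2/2 * (∑ ℓ ∈ aQce K, c (ℓ+1))
        = d2/2 * ((∑ ℓ ∈ aQce K, c (ℓ+2)) - ∑ ℓ ∈ aQce K, c (ℓ+1)) by ring,
      hT1, hT2]
    ring
  rw [h1]
  rw [show (0 : ℝ) - ∑ ℓ ∈ aQce K, gC ℓ + ∑ ℓ ∈ aQce K, gA ℓ
      = ∑ ℓ ∈ aQce K, gA ℓ - ∑ ℓ ∈ aQce K, gC ℓ by ring, h2]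
  ring

theorem stmt9 (N K : ℕ) (hN : 2 ≤ N) (hK : 1 < K) (hKN : K + 3 ≤ N)
    (φ : ℝ → ℝ) (hφ : ContDiffOn ℝ 1 φ (Set.Ioi 0)) (F : ℝ) (hF : 0 < F)
    (g : ℤ → ℝ) (hg : g ∈ uSet N) (hgD : ∀ ℓ ∈ idx N, bD N g ℓ = ghatD K ℓ) :
    (∀ u ∈ uSet N,
      dE (Eqce N K φ) (yF N F) u
          = (N : ℝ)⁻¹ / 2 * deriv φ (2 * F) *
            (bD N u (-(K : ℤ) - 1) - bD N u (-(K : ℤ) + 1)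
              - bD N u (K : ℤ) + bD N u ((K : ℤ) + 2))
      ∧ dE (Eqce N K φ) (yF N F) u = -(deriv φ (2 * F)) * iprod N (bD N g) (bD N u))
    ∧ (deriv φ (2 * F) ≠ 0 → ¬ ∀ u ∈ uSet N, dE (Eqce N K φ) (yF N F) u = 0) := by
  have hN0 : (N : ℝ) ≠ 0 := Nat.cast_ne_zero.mpr (by omega)
  have hφF : HasDerivAt φ (deriv φ F) F :=
    ((hφ.differentiableOn one_ne_zero).differentiableAt (Ioi_mem_nhds hF)).hasDerivAt
  have hφ2 : HasDerivAt φ (deriv φ (2 * F)) (2 * F) :=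
    ((hφ.differentiableOn one_ne_zero).differentiableAt (Ioi_mem_nhds (by linarith))).hasDerivAt
  have main : ∀ u : ℤ → ℝ, (∀ ℓ : ℤ, u (ℓ + 2 * (N : ℤ)) = u ℓ) →
      dE (Eqce N K φ) (yF N F) u
        = (N : ℝ)⁻¹ / 2 * deriv φ (2 * F) *
          (bD N u (-(K : ℤ) - 1) - bD N u (-(K : ℤ) + 1)
            - bD N u (K : ℤ) + bD N u ((K : ℤ) + 2)) :=
    fun u hu => dE_Eqce_eq N K hN hK hKN φ F hφF hφ2 u hu
  have g1 : ghatD K (-(K:ℤ) - 1) = -(1/2) := by rw [ghatD, if_pos (Or.inl rfl)]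
  have g2 : ghatD K (-(K:ℤ) + 1) = 1/2 := by
    rw [ghatD, if_neg (by omega), if_pos (Or.inl rfl)]
  have g3 : ghatD K (K:ℤ) = 1/2 := by
    rw [ghatD, if_neg (by omega), if_pos (Or.inr rfl)]
  have g4 : ghatD K ((K:ℤ) + 2) = -(1/2) := by rw [ghatD, if_pos (Or.inr rfl)]
  have m1 : (-(K:ℤ) - 1) ∈ idx N := by simp only [idx, Finset.mem_Icc]; omega
  have m2 : (-(K:ℤ) + 1) ∈ idx N := by simp only [idx, Finset.mem_Icc]; omega
  have m3 : ((K:ℤ)) ∈ idx N := by simp only [idx, Finset.mem_Icc]; omega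
  have m4 : ((K:ℤ) + 2) ∈ idx N := by simp only [idx, Finset.mem_Icc]; omega
  constructor
  · intro u hu
    refine ⟨main u hu.1, ?_⟩
    rw [main u hu.1]
    have hstep1 : ∑ ℓ ∈ idx N, bD N g ℓ * bD N u ℓ
        = ∑ ℓ ∈ idx N, ghatD K ℓ * bD N u ℓ :=
      Finset.sum_congr rfl fun ℓ hℓ => by rw [hgD ℓ hℓ]
    set S4 : Finset ℤ := insert (-(K:ℤ) - 1) (insert (-(K:ℤ) + 1)
      (insert ((K:ℤ)) ({(K:ℤ) + 2} : Finset ℤ))) with hS4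
    have hsub : S4 ⊆ idx N := by
      intro x hx
      simp only [hS4, Finset.mem_insert, Finset.mem_singleton] at hx
      simp only [idx, Finset.mem_Icc]; omega
    have hstep2 : ∑ ℓ ∈ idx N, ghatD K ℓ * bD N u ℓ
        = ∑ ℓ ∈ S4, ghatD K ℓ * bD N u ℓ := by
      refine (Finset.sum_subset hsub ?_).symm
      intro x _ hnx
      simp only [hS4, Finset.mem_insert, Finset.mem_singleton, not_or] at hnx
      obtain ⟨e1, e2, e3, e4⟩ := hnx
      rw [ghatD, if_neg (by omega), if_neg (by omega), zero_mul]
    have hstep3 : ∑ ℓ ∈ S4, ghatD K ℓ * bD N u ℓ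
        = -(1/2) * bD N u (-(K:ℤ) - 1) + (1/2) * bD N u (-(K:ℤ) + 1)
          + (1/2) * bD N u ((K:ℤ)) + -(1/2) * bD N u ((K:ℤ) + 2) := by
      rw [hS4, Finset.sum_insert (by simp only [Finset.mem_insert, Finset.mem_singleton]; omega), Finset.sum_insert (by simp only [Finset.mem_insert, Finset.mem_singleton]; omega),
        Finset.sum_insert (by simp only [Finset.mem_insert, Finset.mem_singleton]; omega), Finset.sum_singleton, g1, g2, g3, g4]
      ring
    rw [iprod, hstep1, hstep2, hstep3]
    ring
  · intro hd2 hall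
    have h := hall g hg
    rw [main g hg.1, hgD _ m1, hgD _ m2, hgD _ m3, hgD _ m4, g1, g2, g3, g4] at h
    apply hd2
    have h2 : (N : ℝ)⁻¹ * deriv φ (2 * F) = 0 := by linarith [h]
    rcases mul_eq_zero.mp h2 with h3 | h3
    · exact absurd h3 (inv_ne_zero hN0)
    · exact h3
end
end

section
/- Let φ ∈ C²((0,∞); ℝ) and F > 0. Let w be the unique element of 𝒰 whose backward difference satisfies w'_{K+2} = (2ε)^{−1/2}, w'_{−K−1} = −(2ε)^{−1/2}, and w'_ℓ = 0 for all other ℓ in {−N+1, …, N}. Then ‖w'‖_{ℓ²_ε} = 1 and E_qce''(y_F)[w,w] = A_F + (1/2)φ''(2F). In particular, if A_F + (1/2)φ''(2F) ≤ 0, then E_qce''(y_F) is not positive definite on 𝒰 ∖ {0}. -/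
open Finset Real

noncomputable section

noncomputable def Gfun (φ : ℝ → ℝ) (F c n : ℝ) : ℝ → ℝ := fun r =>
  n⁻¹ * (((2*n - 2) * φ F + (2*n - 3) * φ (2*F)) +
    ((((φ (F + r*c) + φ (F - r*c)) + φ (2*F + 2*(r*c))) + φ (2*F - 2*(r*c))) +
      (φ (2*F + r*c) + φ (2*F - r*c))/2))

lemma Gfun_deriv2 (φ : ℝ → ℝ) (hφ : ContDiffOn ℝ 2 φ (Set.Ioi 0)) (F : ℝ) (hF : 0 < F)
    (c : ℝ) (hc : 0 < c) (n : ℝ) :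
    deriv (deriv (Gfun φ F c n)) 0
      = n⁻¹ * (c^2 * (2 * deriv (deriv φ) F + 9 * deriv (deriv φ) (2*F))) := by
  have hop : IsOpen (Set.Ioi (0:ℝ)) := isOpen_Ioi
  have hφ1 : ∀ p : ℝ, 0 < p → HasDerivAt φ (deriv φ p) p := fun p hp =>
    ((hφ.differentiableOn (by norm_num)).differentiableAt (hop.mem_nhds hp)).hasDerivAt
  have hφc : ContDiffOn ℝ 1 (deriv φ) (Set.Ioi 0) :=
    ((contDiffOn_succ_iff_deriv_of_isOpen hop).1 (by exact_mod_cast hφ)).2.2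
  have hφ2 : ∀ p : ℝ, 0 < p → HasDerivAt (deriv φ) (deriv (deriv φ) p) p := fun p hp =>
    ((hφc.differentiableOn (by norm_num)).differentiableAt (hop.mem_nhds hp)).hasDerivAt
  set D := deriv φ with hD
  have i1 : ∀ s : ℝ, HasDerivAt (fun s : ℝ => F + s*c) c s := fun s => by
    simpa using ((hasDerivAt_id s).mul_const c).const_add F
  have i2 : ∀ s : ℝ, HasDerivAt (fun s : ℝ => F - s*c) (-c) s := fun s => by
    simpa using ((hasDerivAt_id s).mul_const c).const_sub F
  have i3 : ∀ s : ℝ, HasDerivAt (fun s : ℝ => 2*F + 2*(s*c)) (2*c) s := fun s => by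
    simpa using (((hasDerivAt_id s).mul_const c).const_mul 2).const_add (2*F)
  have i4 : ∀ s : ℝ, HasDerivAt (fun s : ℝ => 2*F - 2*(s*c)) (-(2*c)) s := fun s => by
    simpa using (((hasDerivAt_id s).mul_const c).const_mul 2).const_sub (2*F)
  have i5 : ∀ s : ℝ, HasDerivAt (fun s : ℝ => 2*F + s*c) c s := fun s => by
    simpa using ((hasDerivAt_id s).mul_const c).const_add (2*F)
  have i6 : ∀ s : ℝ, HasDerivAt (fun s : ℝ => 2*F - s*c) (-c) s := fun s => by
    simpa using ((hasDerivAt_id s).mul_const c).const_sub (2*F)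
  set δ : ℝ := F / (2*c) with hδ
  have hδpos : 0 < δ := by positivity
  have hδc : δ * c = F / 2 := by rw [hδ, div_mul_eq_mul_div, mul_div_mul_right _ _ (ne_of_gt hc)]
  set G1 : ℝ → ℝ := fun s =>
    n⁻¹ * ((((D (F + s*c) * c + D (F - s*c) * (-c)) + D (2*F + 2*(s*c)) * (2*c))
      + D (2*F - 2*(s*c)) * (-(2*c))) + (D (2*F + s*c) * c + D (2*F - s*c) * (-c))/2) with hG1
  have key : ∀ s ∈ Set.Ioo (-δ) δ, HasDerivAt (Gfun φ F c n) (G1 s) s := by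
    intro s hs
    have hsc1 : s * c < F/2 := by
      rw [← hδc]; exact mul_lt_mul_of_pos_right hs.2 hc
    have hsc2 : -(F/2) < s * c := by
      rw [← hδc]; nlinarith [hs.1, hc]
    have p1 : 0 < F + s*c := by linarith
    have p2 : 0 < F - s*c := by linarith
    have p3 : 0 < 2*F + 2*(s*c) := by linarith
    have p4 : 0 < 2*F - 2*(s*c) := by linarith
    have p5 : 0 < 2*F + s*c := by linarith
    have p6 : 0 < 2*F - s*c := by linarith
    have t1 : HasDerivAt (fun s : ℝ => φ (F + s*c)) (D (F + s*c) * c) s := by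
      simpa [Function.comp_def] using (hφ1 _ p1).comp s (i1 s)
    have t2 : HasDerivAt (fun s : ℝ => φ (F - s*c)) (D (F - s*c) * (-c)) s := by
      simpa [Function.comp_def] using (hφ1 _ p2).comp s (i2 s)
    have t3 : HasDerivAt (fun s : ℝ => φ (2*F + 2*(s*c))) (D (2*F + 2*(s*c)) * (2*c)) s := by
      simpa [Function.comp_def] using (hφ1 _ p3).comp s (i3 s)
    have t4 : HasDerivAt (fun s : ℝ => φ (2*F - 2*(s*c))) (D (2*F - 2*(s*c)) * (-(2*c))) s := by
      simpa [Function.comp_def] using (hφ1 _ p4).comp s (i4 s)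
    have t5 : HasDerivAt (fun s : ℝ => φ (2*F + s*c)) (D (2*F + s*c) * c) s := by
      simpa [Function.comp_def] using (hφ1 _ p5).comp s (i5 s)
    have t6 : HasDerivAt (fun s : ℝ => φ (2*F - s*c)) (D (2*F - s*c) * (-c)) s := by
      simpa [Function.comp_def] using (hφ1 _ p6).comp s (i6 s)
    exact (((((t1.add t2).add t3).add t4).add ((t5.add t6).div_const 2)).const_add
      ((2*n - 2) * φ F + (2*n - 3) * φ (2*F))).const_mul n⁻¹
  have hev : deriv (Gfun φ F c n) =ᶠ[nhds (0:ℝ)] G1 := by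
    filter_upwards [Ioo_mem_nhds (neg_lt_zero.mpr hδpos) hδpos] with s hs
    exact (key s hs).deriv
  rw [hev.deriv_eq]
  have k1 : HasDerivAt (fun s : ℝ => D (F + s*c)) (deriv D (F + 0*c) * c) 0 :=
    (hφ2 _ (by norm_num [hF])).comp 0 (i1 0)
  have k2 : HasDerivAt (fun s : ℝ => D (F - s*c)) (deriv D (F - 0*c) * (-c)) 0 :=
    (hφ2 _ (by norm_num [hF])).comp 0 (i2 0)
  have k3 : HasDerivAt (fun s : ℝ => D (2*F + 2*(s*c))) (deriv D (2*F + 2*(0*c)) * (2*c)) 0 :=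
    (hφ2 _ (by norm_num [hF])).comp 0 (i3 0)
  have k4 : HasDerivAt (fun s : ℝ => D (2*F - 2*(s*c))) (deriv D (2*F - 2*(0*c)) * (-(2*c))) 0 :=
    (hφ2 _ (by norm_num [hF])).comp 0 (i4 0)
  have k5 : HasDerivAt (fun s : ℝ => D (2*F + s*c)) (deriv D (2*F + 0*c) * c) 0 :=
    (hφ2 _ (by norm_num [hF])).comp 0 (i5 0)
  have k6 : HasDerivAt (fun s : ℝ => D (2*F - s*c)) (deriv D (2*F - 0*c) * (-c)) 0 :=
    (hφ2 _ (by norm_num [hF])).comp 0 (i6 0)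
  have A1 := k1.mul_const c
  have A2 := k2.mul_const (-c)
  have A3 := k3.mul_const (2*c)
  have A4 := k4.mul_const (-(2*c))
  have A5 := ((k5.mul_const c).add (k6.mul_const (-c))).div_const 2
  have hG1d := ((((A1.add A2).add A3).add A4).add A5).const_mul (n⁻¹)
  have hG1d' : HasDerivAt G1 (n⁻¹ *
      (deriv D (F + 0 * c) * c * c + deriv D (F - 0 * c) * -c * -c +
        deriv D (2 * F + 2 * (0 * c)) * (2 * c) * (2 * c) +
        deriv D (2 * F - 2 * (0 * c)) * -(2 * c) * -(2 * c) +
        (deriv D (2 * F + 0 * c) * c * c + deriv D (2 * F - 0 * c) * -c * -c) / 2)) 0 := by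
    rw [hG1]; exact hG1d
  rw [hG1d'.deriv]
  simp only [zero_mul, mul_zero, add_zero, sub_zero]
  ring

set_option maxHeartbeats 2000000 in
theorem stmt11 (N K : ℕ) (hN : 2 ≤ N) (hK : 1 < K) (hKN : K + 3 ≤ N)
    (φ : ℝ → ℝ) (hφ : ContDiffOn ℝ 2 φ (Set.Ioi 0)) (F : ℝ) (hF : 0 < F)
    (w : ℤ → ℝ) (hw : w ∈ uSet N)
    (hwD : ∀ ℓ ∈ idx N, bD N w ℓ =
      if ℓ = (K : ℤ) + 2 then (Real.sqrt (2 * (N : ℝ)⁻¹))⁻¹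
      else if ℓ = -(K : ℤ) - 1 then -(Real.sqrt (2 * (N : ℝ)⁻¹))⁻¹ else 0) :
    nl2 N (bD N w) = 1
    ∧ d2E (Eqce N K φ) (yF N F) w w
        = deriv (deriv φ) F + 4 * deriv (deriv φ) (2 * F)
          + 1 / 2 * deriv (deriv φ) (2 * F)
    ∧ (deriv (deriv φ) F + 4 * deriv (deriv φ) (2 * F)
          + 1 / 2 * deriv (deriv φ) (2 * F) ≤ 0 →
        ¬ ∀ u ∈ uSet N, u ≠ 0 → 0 < d2E (Eqce N K φ) (yF N F) u u) := by
  have hNpos : (0:ℝ) < (N:ℝ) := by exact_mod_cast (by omega : 0 < N)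
  have hN0 : (N:ℝ) ≠ 0 := ne_of_gt hNpos
  set c : ℝ := (Real.sqrt (2 * (N:ℝ)⁻¹))⁻¹ with hcdef
  have hcpos : 0 < c := by
    rw [hcdef]
    exact inv_pos.mpr (Real.sqrt_pos.mpr (mul_pos two_pos (inv_pos.mpr hNpos)))
  have hcsq : c^2 = (N:ℝ)/2 := by
    rw [hcdef, inv_pow, Real.sq_sqrt (by positivity), mul_inv, inv_inv]; ring
  have hper : ∀ ℓ : ℤ, w (ℓ + 2*(N:ℤ)) = w ℓ := hw.1
  have hd : ∀ ℓ : ℤ, -(N:ℤ)+1 ≤ ℓ → ℓ ≤ (N:ℤ)+1 →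
      bD N w ℓ = if ℓ = (K:ℤ)+2 then c else if ℓ = -(K:ℤ)-1 then -c else 0 := by
    intro ℓ h1 h2
    by_cases hl : ℓ ≤ (N:ℤ)
    · exact hwD ℓ (by simp only [idx, Finset.mem_Icc]; omega)
    · have hE : ℓ = (N:ℤ)+1 := by omega
      subst hE
      have w1 : w ((N:ℤ)+1) = w (-(N:ℤ)+1) := by
        have h := hper (-(N:ℤ)+1); rw [← h]; congr 1; ring
      have w2 : w ((N:ℤ)+1-1) = w (-(N:ℤ)+1-1) := by
        have h := hper (-(N:ℤ)+1-1); rw [← h]; congr 1; ring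
      have e1 : bD N w ((N:ℤ)+1) = bD N w (-(N:ℤ)+1) := by
        unfold bD; rw [w1, w2]
      rw [e1, hwD _ (by simp only [idx, Finset.mem_Icc]; omega)]
      split_ifs <;> first | rfl | (exfalso; omega)
  -- Part 1
  have hpart1 : nl2 N (bD N w) = 1 := by
    unfold nl2
    have hsub2 : ({(K:ℤ)+2, -(K:ℤ)-1} : Finset ℤ) ⊆ idx N := by
      intro ℓ hl
      simp only [Finset.mem_insert, Finset.mem_singleton] at hl
      simp only [idx, Finset.mem_Icc]; omega
    have h0 : ∑ ℓ ∈ idx N \ ({(K:ℤ)+2, -(K:ℤ)-1} : Finset ℤ), (bD N w ℓ)^2 = 0 := by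
      apply Finset.sum_eq_zero
      intro ℓ hl
      simp only [Finset.mem_sdiff, idx, Finset.mem_Icc, Finset.mem_insert,
        Finset.mem_singleton] at hl
      rw [hd ℓ (by omega) (by omega)]
      split_ifs <;> first | (exfalso; omega) | norm_num
    rw [← Finset.sum_sdiff hsub2, h0,
      Finset.sum_insert (by simp only [Finset.mem_singleton]; omega), Finset.sum_singleton,
      hd ((K:ℤ)+2) (by omega) (by omega), hd (-(K:ℤ)-1) (by omega) (by omega)]
    split_ifs <;> try (exfalso; omega)
    rw [show (0:ℝ) + (c^2 + (-c)^2) = (N:ℝ) from by rw [neg_sq, hcsq]; ring,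
      inv_mul_cancel₀ hN0, Real.sqrt_one]
  -- closed form of the energy along the path
  have H : ∀ r : ℝ, Eqce N K φ (yF N F + r • w) = Gfun φ F c (N:ℝ) r := by
    intro r
    have hbDr : ∀ ℓ : ℤ, bD N (yF N F + r • w) ℓ = F + r * bD N w ℓ := by
      intro ℓ
      unfold bD yF
      simp only [Pi.add_apply, Pi.smul_apply, smul_eq_mul]
      push_cast
      field_simp
      ring
    have hsubA : aQce K ⊆ idx N := by
      intro ℓ hl
      simp only [aQce, Finset.mem_Icc] at hl
      simp only [idx, Finset.mem_Icc]; omega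
    have hS : ({-(K:ℤ)-2, -(K:ℤ)-1, (K:ℤ)+1, (K:ℤ)+2} : Finset ℤ) ⊆ idx N := by
      intro ℓ hl
      simp only [Finset.mem_insert, Finset.mem_singleton] at hl
      simp only [idx, Finset.mem_Icc]; omega
    have hSA : ({-(K:ℤ), (K:ℤ)} : Finset ℤ) ⊆ aQce K := by
      intro ℓ hl
      simp only [Finset.mem_insert, Finset.mem_singleton] at hl
      simp only [aQce, Finset.mem_Icc]; omega
    have hgenC : ∀ ℓ ∈ idx N \ ({-(K:ℤ)-2, -(K:ℤ)-1, (K:ℤ)+1, (K:ℤ)+2} : Finset ℤ),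
        eCont N φ (yF N F + r • w) ℓ = φ F + φ (2*F) := by
      intro ℓ hl
      simp only [Finset.mem_sdiff, idx, Finset.mem_Icc, Finset.mem_insert,
        Finset.mem_singleton] at hl
      unfold eCont
      simp only [hbDr]
      rw [hd ℓ (by omega) (by omega), hd (ℓ+1) (by omega) (by omega)]
      split_ifs <;> first | (exfalso; omega) | (simp only [mul_zero, add_zero]; ring_nf)
    have hgenC2 : ∀ ℓ ∈ aQce K, eCont N φ (yF N F + r • w) ℓ = φ F + φ (2*F) := by
      intro ℓ hl
      simp only [aQce, Finset.mem_Icc] at hl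
      unfold eCont
      simp only [hbDr]
      rw [hd ℓ (by omega) (by omega), hd (ℓ+1) (by omega) (by omega)]
      split_ifs <;> first | (exfalso; omega) | (simp only [mul_zero, add_zero]; ring_nf)
    have hgenA : ∀ ℓ ∈ aQce K \ ({-(K:ℤ), (K:ℤ)} : Finset ℤ),
        eAtom N φ (yF N F + r • w) ℓ = φ F + φ (2*F) := by
      intro ℓ hl
      simp only [Finset.mem_sdiff, aQce, Finset.mem_Icc, Finset.mem_insert,
        Finset.mem_singleton] at hl
      unfold eAtom
      simp only [hbDr]
      rw [hd (ℓ-1) (by omega) (by omega), hd ℓ (by omega) (by omega),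
        hd (ℓ+1) (by omega) (by omega), hd (ℓ+2) (by omega) (by omega)]
      split_ifs <;> first | (exfalso; omega) | (simp only [mul_zero, add_zero]; ring_nf)
    have e1 : eCont N φ (yF N F + r • w) (-(K:ℤ)-2)
        = (φ F + φ (F - r*c) + φ (2*F) + φ (2*F - 2*(r*c)))/2 := by
      unfold eCont
      simp only [hbDr]
      rw [hd (-(K:ℤ)-2) (by omega) (by omega), hd (-(K:ℤ)-2+1) (by omega) (by omega)]
      split_ifs <;> first | (exfalso; omega) | (simp only [mul_zero, add_zero]; ring_nf)
    have e2 : eCont N φ (yF N F + r • w) (-(K:ℤ)-1)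
        = (φ (F - r*c) + φ F + φ (2*F - 2*(r*c)) + φ (2*F))/2 := by
      unfold eCont
      simp only [hbDr]
      rw [hd (-(K:ℤ)-1) (by omega) (by omega), hd (-(K:ℤ)-1+1) (by omega) (by omega)]
      split_ifs <;> first | (exfalso; omega) | (simp only [mul_zero, add_zero]; ring_nf)
    have e3 : eCont N φ (yF N F + r • w) ((K:ℤ)+1)
        = (φ F + φ (F + r*c) + φ (2*F) + φ (2*F + 2*(r*c)))/2 := by
      unfold eCont
      simp only [hbDr]
      rw [hd ((K:ℤ)+1) (by omega) (by omega), hd ((K:ℤ)+1+1) (by omega) (by omega)]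
      split_ifs <;> first | (exfalso; omega) | (simp only [mul_zero, add_zero]; ring_nf)
    have e4 : eCont N φ (yF N F + r • w) ((K:ℤ)+2)
        = (φ (F + r*c) + φ F + φ (2*F + 2*(r*c)) + φ (2*F))/2 := by
      unfold eCont
      simp only [hbDr]
      rw [hd ((K:ℤ)+2) (by omega) (by omega), hd ((K:ℤ)+2+1) (by omega) (by omega)]
      split_ifs <;> first | (exfalso; omega) | (simp only [mul_zero, add_zero]; ring_nf)
    have a1 : eAtom N φ (yF N F + r • w) (-(K:ℤ))
        = (φ F + φ F + φ (2*F - r*c) + φ (2*F))/2 := by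
      unfold eAtom
      simp only [hbDr]
      rw [hd (-(K:ℤ)-1) (by omega) (by omega), hd (-(K:ℤ)) (by omega) (by omega),
        hd (-(K:ℤ)+1) (by omega) (by omega), hd (-(K:ℤ)+2) (by omega) (by omega)]
      split_ifs <;> first | (exfalso; omega) | (simp only [mul_zero, add_zero]; ring_nf)
    have a2 : eAtom N φ (yF N F + r • w) ((K:ℤ))
        = (φ F + φ F + φ (2*F) + φ (2*F + r*c))/2 := by
      unfold eAtom
      simp only [hbDr]
      rw [hd ((K:ℤ)-1) (by omega) (by omega), hd ((K:ℤ)) (by omega) (by omega),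
        hd ((K:ℤ)+1) (by omega) (by omega), hd ((K:ℤ)+2) (by omega) (by omega)]
      split_ifs <;> first | (exfalso; omega) | (simp only [mul_zero, add_zero]; ring_nf)
    have hcard1 : (((idx N \ ({-(K:ℤ)-2, -(K:ℤ)-1, (K:ℤ)+1, (K:ℤ)+2} : Finset ℤ)).card : ℝ))
        = 2*(N:ℝ) - 4 := by
      rw [Finset.card_sdiff_of_subset hS]
      have h1 : (idx N).card = 2*N := by simp [idx, Int.card_Icc]; omega
      have h2 : (({-(K:ℤ)-2, -(K:ℤ)-1, (K:ℤ)+1, (K:ℤ)+2} : Finset ℤ)).card = 4 := by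
        rw [Finset.card_insert_of_notMem
            (by simp only [Finset.mem_insert, Finset.mem_singleton]; omega),
          Finset.card_insert_of_notMem
            (by simp only [Finset.mem_insert, Finset.mem_singleton]; omega),
          Finset.card_insert_of_notMem (by simp only [Finset.mem_singleton]; omega),
          Finset.card_singleton]
      rw [h1, h2, Nat.cast_sub (by omega)]
      push_cast; ring
    have hcard2 : (((aQce K).card : ℝ)) = 2*(K:ℝ) + 1 := by
      have h1 : (aQce K).card = 2*K+1 := by simp [aQce, Int.card_Icc]; omega
      rw [h1]; push_cast; ring
    have hcard3 : (((aQce K \ ({-(K:ℤ), (K:ℤ)} : Finset ℤ)).card : ℝ)) = 2*(K:ℝ) - 1 := by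
      rw [Finset.card_sdiff_of_subset hSA]
      have h1 : (aQce K).card = 2*K+1 := by simp [aQce, Int.card_Icc]; omega
      have h2 : (({-(K:ℤ), (K:ℤ)} : Finset ℤ)).card = 2 := by
        rw [Finset.card_insert_of_notMem (by simp only [Finset.mem_singleton]; omega),
          Finset.card_singleton]
      rw [h1, h2, Nat.cast_sub (by omega)]
      push_cast; ring
    unfold Eqce Gfun
    rw [Finset.sum_sdiff_eq_sub hsubA, ← Finset.sum_sdiff hS,
      Finset.sum_congr rfl hgenC, Finset.sum_const,
      Finset.sum_insert (by simp only [Finset.mem_insert, Finset.mem_singleton]; omega),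
      Finset.sum_insert (by simp only [Finset.mem_insert, Finset.mem_singleton]; omega),
      Finset.sum_insert (by simp only [Finset.mem_singleton]; omega),
      Finset.sum_singleton, e1, e2, e3, e4,
      Finset.sum_congr (rfl : aQce K = aQce K) hgenC2, Finset.sum_const,
      ← Finset.sum_sdiff hSA,
      Finset.sum_congr rfl hgenA, Finset.sum_const,
      Finset.sum_insert (by simp only [Finset.mem_singleton]; omega),
      Finset.sum_singleton, a1, a2,
      nsmul_eq_mul, nsmul_eq_mul, nsmul_eq_mul, hcard1, hcard2, hcard3]
    ring
  -- Part 2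
  have hpart2 : d2E (Eqce N K φ) (yF N F) w w
      = deriv (deriv φ) F + 4 * deriv (deriv φ) (2 * F)
        + 1 / 2 * deriv (deriv φ) (2 * F) := by
    have hrw : (fun s : ℝ => deriv (fun t : ℝ => Eqce N K φ (yF N F + s • w + t • w)) 0)
        = fun s => deriv (Gfun φ F c (N:ℝ)) s := by
      funext s
      have hfun : (fun t : ℝ => Eqce N K φ (yF N F + s • w + t • w))
          = fun t => Gfun φ F c (N:ℝ) (s + t) := by
        funext t
        rw [show yF N F + s • w + t • w = yF N F + (s+t) • w from by
          rw [add_smul]; exact add_assoc _ _ _]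
        exact H (s+t)
      rw [hfun, deriv_comp_const_add]
      norm_num
    unfold d2E
    rw [hrw]
    have hder := Gfun_deriv2 φ hφ F hF c hcpos (N:ℝ)
    show deriv (deriv (Gfun φ F c (N:ℝ))) 0 = _
    rw [hder, hcsq]
    field_simp
    ring
  refine ⟨hpart1, hpart2, ?_⟩
  intro hle hall
  have hw0 : w ≠ 0 := by
    intro h0
    have hKmem := hd ((K:ℤ)+2) (by omega) (by omega)
    rw [if_pos rfl, h0] at hKmem
    simp only [bD, Pi.zero_apply, sub_self, mul_zero] at hKmem
    exact (ne_of_gt hcpos) hKmem.symm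
  have hpos := hall w hw hw0
  rw [hpart2] at hpos
  linarith
end
end

section
/- Let φ ∈ C²((0,∞); ℝ) and F > 0 with φ''(2F) ≤ 0. Then for all u, v ∈ 𝒰, |E_qce''(y_F)[u,v] − φ''(F) ⟨u', v'⟩| ≤ 5 |φ''(2F)| ‖u'‖_{ℓ∞} ‖v'‖_{ℓ¹_ε}. -/
open Finset Real

noncomputable section

section MyAux

variable {φ : ℝ → ℝ}

lemma my_hasDerivAt_phi (hφ : ContDiffOn ℝ 2 φ (Set.Ioi 0)) {x : ℝ} (hx : 0 < x) :
    HasDerivAt φ (deriv φ x) x :=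
  ((hφ.differentiableOn (by norm_num)).differentiableAt
    (isOpen_Ioi.mem_nhds hx)).hasDerivAt

lemma my_hasDerivAt_phi' (hφ : ContDiffOn ℝ 2 φ (Set.Ioi 0)) {x : ℝ} (hx : 0 < x) :
    HasDerivAt (deriv φ) (deriv (deriv φ) x) x := by
  have h2 : ContDiffOn ℝ 1 (deriv φ) (Set.Ioi 0) :=
    hφ.deriv_of_isOpen isOpen_Ioi (by norm_num)
  exact ((h2.differentiableOn (by norm_num)).differentiableAt (isOpen_Ioi.mem_nhds hx)).hasDerivAt

lemma my_hd_inner (hφ : ContDiffOn ℝ 2 φ (Set.Ioi 0)) (q b : ℝ) (hq : 0 < q) :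
    HasDerivAt (fun t : ℝ => φ (q + t * b)) (deriv φ q * b) 0 := by
  have h1 : HasDerivAt (fun t : ℝ => q + t * b) b 0 := by
    simpa using ((hasDerivAt_id (0:ℝ)).mul_const b).const_add q
  have h0 : (fun t : ℝ => q + t * b) 0 = q := by simp
  have h2 := (my_hasDerivAt_phi hφ (x := (fun t : ℝ => q + t * b) 0) (by simpa using hq)).comp 0 h1
  rw [h0] at h2
  exact h2

lemma my_hd_outer (hφ : ContDiffOn ℝ 2 φ (Set.Ioi 0)) (c a b : ℝ) (hc : 0 < c) :
    HasDerivAt (fun s : ℝ => deriv φ (c + s * a) * b) (deriv (deriv φ) c * a * b) 0 := by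
  have h1 : HasDerivAt (fun s : ℝ => c + s * a) a 0 := by
    simpa using ((hasDerivAt_id (0:ℝ)).mul_const a).const_add c
  have h0 : (fun s : ℝ => c + s * a) 0 = c := by simp
  have h2 := (my_hasDerivAt_phi' hφ (x := (fun s : ℝ => c + s * a) 0) (by simpa using hc)).comp 0 h1
  rw [h0] at h2
  exact h2.mul_const b

end MyAux
section MyAux2

lemma my_bD_comb {N : ℕ} (hN : 0 < N) (F s t : ℝ) (u v : ℤ → ℝ) (ℓ : ℤ) :
    bD N (yF N F + s • u + t • v) ℓ = F + s * bD N u ℓ + t * bD N v ℓ := by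
  have hN' : (N:ℝ) ≠ 0 := Nat.cast_ne_zero.2 hN.ne'
  simp only [bD, yF, Pi.add_apply, Pi.smul_apply, smul_eq_mul]
  push_cast
  field_simp
  ring

lemma my_bD_periodic {N : ℕ} {u : ℤ → ℝ} (hu : ∀ ℓ : ℤ, u (ℓ + 2*(N:ℤ)) = u ℓ) (ℓ : ℤ) :
    bD N u (ℓ + 2*(N:ℤ)) = bD N u ℓ := by
  simp only [bD]
  rw [show ℓ + 2*(N:ℤ) - 1 = (ℓ-1) + 2*(N:ℤ) by ring, hu, hu]

lemma my_periodic_rep {N : ℕ} (hN : 0 < N) {f : ℤ → ℝ}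
    (hf : ∀ ℓ : ℤ, f (ℓ + 2*(N:ℤ)) = f ℓ) (ℓ : ℤ) :
    ∃ m ∈ idx N, f ℓ = f m := by
  have hp : Function.Periodic f (2*(N:ℤ)) := hf
  have h2N : (0:ℤ) < 2*(N:ℤ) := by positivity
  set r := (ℓ - (-(N:ℤ)+1)) % (2*(N:ℤ)) with hr
  refine ⟨-(N:ℤ)+1 + r, ?_, ?_⟩
  · have h1 : 0 ≤ r := Int.emod_nonneg _ h2N.ne'
    have h2 : r < 2*(N:ℤ) := Int.emod_lt_of_pos _ h2N
    simp only [idx, Finset.mem_Icc]; omega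
  · set q := (ℓ - (-(N:ℤ)+1)) / (2*(N:ℤ)) with hq
    have hdiv : ℓ - (-(N:ℤ)+1) = 2*(N:ℤ) * q + r := (Int.mul_ediv_add_emod _ _).symm
    have hl : ℓ = (-(N:ℤ)+1 + r) + 2*(N:ℤ) * q := by omega
    rw [hl, show 2*(N:ℤ)*q = q*(2*(N:ℤ)) by ring]
    have := ((hp.int_mul q) (-(N:ℤ)+1+r))
    simpa using this

lemma my_le_nlinf {N : ℕ} (hN : 0 < N) {f : ℤ → ℝ}
    (hf : ∀ ℓ : ℤ, f (ℓ + 2*(N:ℤ)) = f ℓ) (ℓ : ℤ) :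
    |f ℓ| ≤ nlinf N f := by
  obtain ⟨m, hm, hfm⟩ := my_periodic_rep hN hf ℓ
  rw [hfm]
  have : |f m| = (fun x : {x : ℤ // x ∈ idx N} => |f x.1|) ⟨m, hm⟩ := rfl
  rw [this, nlinf]
  exact le_ciSup (f := fun x : {x : ℤ // x ∈ idx N} => |f x.1|)
    (Set.Finite.bddAbove (Set.finite_range _)) ⟨m, hm⟩

lemma my_nlinf_nonneg {N : ℕ} (hN : 0 < N) {f : ℤ → ℝ}
    (hf : ∀ ℓ : ℤ, f (ℓ + 2*(N:ℤ)) = f ℓ) : 0 ≤ nlinf N f :=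
  le_trans (abs_nonneg _) (my_le_nlinf hN hf 0)

lemma my_sum_shift (f : ℤ → ℝ) (a b c : ℤ) :
    ∑ ℓ ∈ Finset.Icc a b, f (ℓ + c) = ∑ ℓ ∈ Finset.Icc (a+c) (b+c), f ℓ := by
  rw [← Finset.map_add_right_Icc, Finset.sum_map]
  rfl

lemma my_sum_peel_top (f : ℤ → ℝ) (a b : ℤ) (h : a ≤ b) :
    ∑ ℓ ∈ Finset.Icc a b, f ℓ = (∑ ℓ ∈ Finset.Icc a (b-1), f ℓ) + f b := by
  have hs : Finset.Icc a b = insert b (Finset.Icc a (b-1)) := by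
    ext x; simp only [Finset.mem_Icc, Finset.mem_insert]; omega
  rw [hs, Finset.sum_insert (by simp only [Finset.mem_Icc]; omega)]
  ring

lemma my_sum_peel_bot (f : ℤ → ℝ) (a b : ℤ) (h : a ≤ b) :
    ∑ ℓ ∈ Finset.Icc a b, f ℓ = f a + ∑ ℓ ∈ Finset.Icc (a+1) b, f ℓ := by
  have hs : Finset.Icc a b = insert a (Finset.Icc (a+1) b) := by
    ext x; simp only [Finset.mem_Icc, Finset.mem_insert]; omega
  rw [hs, Finset.sum_insert (by simp only [Finset.mem_Icc]; omega)]

lemma my_sum_shift_period {N : ℕ} (hN : 0 < N) {f : ℤ → ℝ}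
    (hf : ∀ ℓ : ℤ, f (ℓ + 2*(N:ℤ)) = f ℓ) :
    ∑ ℓ ∈ idx N, f (ℓ + 1) = ∑ ℓ ∈ idx N, f ℓ := by
  have hN1 : -(N:ℤ)+1 ≤ (N:ℤ) := by omega
  rw [idx, my_sum_shift,
    my_sum_peel_top f (-(N:ℤ)+1+1) ((N:ℤ)+1) (by omega),
    my_sum_peel_bot f (-(N:ℤ)+1) (N:ℤ) hN1]
  have : f ((N:ℤ)+1) = f (-(N:ℤ)+1) := by
    rw [show (N:ℤ)+1 = (-(N:ℤ)+1) + 2*(N:ℤ) by ring, hf]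
  rw [show (N:ℤ)+1-1 = (N:ℤ) by ring, this]
  ring

end MyAux2

theorem stmt12 (N K : ℕ) (hN : 2 ≤ N) (hK : 1 < K) (hKN : K + 3 ≤ N)
    (φ : ℝ → ℝ) (hφ : ContDiffOn ℝ 2 φ (Set.Ioi 0)) (F : ℝ) (hF : 0 < F)
    (h2F : deriv (deriv φ) (2 * F) ≤ 0) :
    ∀ u ∈ uSet N, ∀ v ∈ uSet N,
      |d2E (Eqce N K φ) (yF N F) u v - deriv (deriv φ) F * iprod N (bD N u) (bD N v)|
        ≤ 5 * |deriv (deriv φ) (2 * F)| * nlinf N (bD N u) * nl1 N (bD N v) := by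
  intro u hu v hv
  have hNpos : 0 < N := by omega
  have hNR : (0:ℝ) < (N:ℝ) := by exact_mod_cast hNpos
  have h2F0 : (0:ℝ) < 2*F := by linarith
  have hUper : ∀ ℓ : ℤ, bD N u (ℓ + 2*(N:ℤ)) = bD N u ℓ := fun ℓ => my_bD_periodic hu.1 ℓ
  have hVper : ∀ ℓ : ℤ, bD N v (ℓ + 2*(N:ℤ)) = bD N v ℓ := fun ℓ => my_bD_periodic hv.1 ℓ
  set Un := nlinf N (bD N u) with hUndef
  have hUb : ∀ ℓ : ℤ, |bD N u ℓ| ≤ Un := fun ℓ => my_le_nlinf hNpos hUper ℓ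
  have hUn0 : 0 ≤ Un := my_nlinf_nonneg hNpos hUper
  set δ := F / (2*(Un+1)) with hδdef
  have hUn1 : (0:ℝ) < Un + 1 := by linarith
  have hδ : 0 < δ := by rw [hδdef]; positivity
  have hhalf : δ * (Un + 1) = F / 2 := by rw [hδdef]; field_simp
  have hpos1 : ∀ s : ℝ, |s| < δ → ∀ ℓ : ℤ, 0 < F + s * bD N u ℓ := by
    intro s hs ℓ
    have h1 : |s * bD N u ℓ| ≤ δ * Un := by
      rw [abs_mul]; exact mul_le_mul hs.le (hUb ℓ) (abs_nonneg _) hδ.le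
    have h2 : δ * Un ≤ F/2 := by nlinarith [hδ.le]
    have h3 := neg_abs_le (s * bD N u ℓ)
    linarith
  have hpos2 : ∀ s : ℝ, |s| < δ → ∀ a : ℝ, |a| ≤ 2*Un → 0 < 2*F + s * a := by
    intro s hs a ha
    have h1 : |s * a| ≤ δ * (2*Un) := by
      rw [abs_mul]; exact mul_le_mul hs.le ha (abs_nonneg _) hδ.le
    have h2 : δ * (2*Un) ≤ F := by nlinarith [hδ.le]
    have h3 := neg_abs_le (s * a)
    linarith
  have hb2 : ∀ ℓ : ℤ, |2*bD N u ℓ| ≤ 2*Un := by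
    intro ℓ; rw [abs_mul, abs_two]
    exact mul_le_mul_of_nonneg_left (hUb ℓ) (by norm_num)
  have hb3 : ∀ ℓ : ℤ, |bD N u (ℓ-1) + bD N u ℓ| ≤ 2*Un := by
    intro ℓ; exact (abs_add_le _ _).trans (by linarith [hUb (ℓ-1), hUb ℓ])
  have hb4 : ∀ ℓ : ℤ, |bD N u (ℓ+1) + bD N u (ℓ+2)| ≤ 2*Un := by
    intro ℓ; exact (abs_add_le _ _).trans (by linarith [hUb (ℓ+1), hUb (ℓ+2)])
  -- representation of the energy along the two-parameter family
  have hrep : ∀ s t : ℝ, Eqce N K φ (yF N F + s • u + t • v) =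
      (↑N : ℝ)⁻¹ * ((∑ ℓ ∈ idx N \ aQce K, (φ ((F + s * bD N u ℓ) + t * bD N v ℓ) + φ ((F + s * bD N u (ℓ+1)) + t * bD N v (ℓ+1)) + φ ((2*F + s * (2*bD N u ℓ)) + t * (2*bD N v ℓ)) + φ ((2*F + s * (2*bD N u (ℓ+1))) + t * (2*bD N v (ℓ+1)))) / 2) + ∑ ℓ ∈ aQce K, (φ ((F + s * bD N u ℓ) + t * bD N v ℓ) + φ ((F + s * bD N u (ℓ+1)) + t * bD N v (ℓ+1)) + φ ((2*F + s * (bD N u (ℓ-1) + bD N u ℓ)) + t * (bD N v (ℓ-1) + bD N v ℓ)) + φ ((2*F + s * (bD N u (ℓ+1) + bD N u (ℓ+2))) + t * (bD N v (ℓ+1) + bD N v (ℓ+2)))) / 2) := by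
    intro s t
    simp only [Eqce, eCont, eAtom, my_bD_comb hNpos]
    congr 1
    congr 1
    · exact Finset.sum_congr rfl fun ℓ _ => by
        rw [show 2 * (F + s * bD N u ℓ + t * bD N v ℓ)
              = (2*F + s * (2*bD N u ℓ)) + t * (2*bD N v ℓ) from by ring,
            show 2 * (F + s * bD N u (ℓ+1) + t * bD N v (ℓ+1))
              = (2*F + s * (2*bD N u (ℓ+1))) + t * (2*bD N v (ℓ+1)) from by ring]
    · exact Finset.sum_congr rfl fun ℓ _ => by
        rw [show F + s * bD N u (ℓ-1) + t * bD N v (ℓ-1) + (F + s * bD N u ℓ + t * bD N v ℓ)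
              = (2*F + s * (bD N u (ℓ-1) + bD N u ℓ)) + t * (bD N v (ℓ-1) + bD N v ℓ) from by ring,
            show F + s * bD N u (ℓ+1) + t * bD N v (ℓ+1) + (F + s * bD N u (ℓ+2) + t * bD N v (ℓ+2))
              = (2*F + s * (bD N u (ℓ+1) + bD N u (ℓ+2))) + t * (bD N v (ℓ+1) + bD N v (ℓ+2)) from by ring]
  -- inner derivative
  have hinner : ∀ s : ℝ, |s| < δ → HasDerivAt (fun t : ℝ =>
      (↑N : ℝ)⁻¹ * ((∑ ℓ ∈ idx N \ aQce K, (φ ((F + s * bD N u ℓ) + t * bD N v ℓ) + φ ((F + s * bD N u (ℓ+1)) + t * bD N v (ℓ+1)) + φ ((2*F + s * (2*bD N u ℓ)) + t * (2*bD N v ℓ)) + φ ((2*F + s * (2*bD N u (ℓ+1))) + t * (2*bD N v (ℓ+1)))) / 2) + ∑ ℓ ∈ aQce K, (φ ((F + s * bD N u ℓ) + t * bD N v ℓ) + φ ((F + s * bD N u (ℓ+1)) + t * bD N v (ℓ+1)) + φ ((2*F + s * (bD N u (ℓ-1) + bD N u ℓ)) + t * (bD N v (ℓ-1) + bD N v ℓ))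 + φ ((2*F + s * (bD N u (ℓ+1) + bD N u (ℓ+2))) + t * (bD N v (ℓ+1) + bD N v (ℓ+2)))) / 2)) ((↑N : ℝ)⁻¹ * ((∑ ℓ ∈ idx N \ aQce K, (deriv φ (F + s * bD N u ℓ) * bD N v ℓ + deriv φ (F + s * bD N u (ℓ+1)) * bD N v (ℓ+1) + deriv φ (2*F + s * (2*bD N u ℓ)) * (2*bD N v ℓ) + deriv φ (2*F + s * (2*bD N u (ℓ+1))) * (2*bD N v (ℓ+1))) / 2) + ∑ ℓ ∈ aQce K, (deriv φ (F + s * bD N u ℓ) * bD N v ℓ + deriv φ (F + s * bD N u (ℓ+1)) * bD N v (ℓ+1) + deriv φ (2*F + s * (bD N u (ℓ-1) + bD N u ℓ)) * (bD N v (ℓ-1) + bD N v ℓ) + deriv φ (2*F + s * (bD N u (ℓ+1) + bD N u (ℓ+2))) * (bD N v (ℓ+1) + bD N v (ℓ+2))) / 2)) 0 := by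
    intro s hs
    exact HasDerivAt.const_mul _ ((HasDerivAt.fun_sum (fun ℓ _ =>
        ((((my_hd_inner hφ (F + s * bD N u ℓ) (bD N v ℓ) (hpos1 s hs ℓ)).add (my_hd_inner hφ (F + s * bD N u (ℓ+1)) (bD N v (ℓ+1)) (hpos1 s hs (ℓ+1)))).add (my_hd_inner hφ (2*F + s * (2*bD N u ℓ)) ((2*bD N v ℓ)) (hpos2 s hs (2*bD N u ℓ) (hb2 ℓ)))).add (my_hd_inner hφ (2*F + s * (2*bD N u (ℓ+1))) ((2*bD N v (ℓ+1))) (hpos2 s hs (2*bD N u (ℓ+1)) (hb2 (ℓ+1))))).div_const 2)).add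
      (HasDerivAt.fun_sum (fun ℓ _ =>
        ((((my_hd_inner hφ (F + s * bD N u ℓ) (bD N v ℓ) (hpos1 s hs ℓ)).add (my_hd_inner hφ (F + s * bD N u (ℓ+1)) (bD N v (ℓ+1)) (hpos1 s hs (ℓ+1)))).add (my_hd_inner hφ (2*F + s * (bD N u (ℓ-1) + bD N u ℓ)) ((bD N v (ℓ-1) + bD N v ℓ)) (hpos2 s hs (bD N u (ℓ-1) + bD N u ℓ) (hb3 ℓ)))).add (my_hd_inner hφ (2*F + s * (bD N u (ℓ+1) + bD N u (ℓ+2))) ((bD N v (ℓ+1) + bD N v (ℓ+2))) (hpos2 s hs (bD N u (ℓ+1) + bD N u (ℓ+2)) (hb4 ℓ)))).div_const 2)))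
  -- outer derivative
  have houter : HasDerivAt (fun s : ℝ =>
      (↑N : ℝ)⁻¹ * ((∑ ℓ ∈ idx N \ aQce K, (deriv φ (F + s * bD N u ℓ) * bD N v ℓ + deriv φ (F + s * bD N u (ℓ+1)) * bD N v (ℓ+1) + deriv φ (2*F + s * (2*bD N u ℓ)) * (2*bD N v ℓ) + deriv φ (2*F + s * (2*bD N u (ℓ+1))) * (2*bD N v (ℓ+1))) / 2) + ∑ ℓ ∈ aQce K, (deriv φ (F + s * bD N u ℓ) * bD N v ℓ + deriv φ (F + s * bD N u (ℓ+1)) * bD N v (ℓ+1) + deriv φ (2*F + s * (bD N u (ℓ-1) + bD N u ℓ)) * (bD N v (ℓ-1) + bD N v ℓ) + deriv φ (2*F + s * (bD N u (ℓ+1) + bD N u (ℓ+2))) * (bD N v (ℓ+1) + bD N v (ℓ+2))) / 2)) ((↑N : ℝ)⁻¹ * ((∑ ℓ ∈ idx N \ aQce K, (deriv (deriv φ) (F) * bD N u ℓ * bD N v ℓ + deriv (deriv φ) (F) * bD N u (ℓ+1) * bD N v (ℓ+1) + deriv (deriv φ) (2*F) * (2*bD N u ℓ) * (2*bD N v ℓ)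 + deriv (deriv φ) (2*F) * (2*bD N u (ℓ+1)) * (2*bD N v (ℓ+1))) / 2) + ∑ ℓ ∈ aQce K, (deriv (deriv φ) (F) * bD N u ℓ * bD N v ℓ + deriv (deriv φ) (F) * bD N u (ℓ+1) * bD N v (ℓ+1) + deriv (deriv φ) (2*F) * (bD N u (ℓ-1) + bD N u ℓ) * (bD N v (ℓ-1) + bD N v ℓ) + deriv (deriv φ) (2*F) * (bD N u (ℓ+1) + bD N u (ℓ+2)) * (bD N v (ℓ+1) + bD N v (ℓ+2))) / 2)) 0 := by
    exact HasDerivAt.const_mul _ ((HasDerivAt.fun_sum (fun ℓ _ =>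
        ((((my_hd_outer hφ (F) (bD N u ℓ) (bD N v ℓ) hF).add (my_hd_outer hφ (F) (bD N u (ℓ+1)) (bD N v (ℓ+1)) hF)).add (my_hd_outer hφ (2*F) ((2*bD N u ℓ)) ((2*bD N v ℓ)) h2F0)).add (my_hd_outer hφ (2*F) ((2*bD N u (ℓ+1))) ((2*bD N v (ℓ+1))) h2F0)).div_const 2)).add
      (HasDerivAt.fun_sum (fun ℓ _ =>
        ((((my_hd_outer hφ (F) (bD N u ℓ) (bD N v ℓ) hF).add (my_hd_outer hφ (F) (bD N u (ℓ+1)) (bD N v (ℓ+1)) hF)).add (my_hd_outer hφ (2*F) ((bD N u (ℓ-1) + bD N u ℓ)) ((bD N v (ℓ-1) + bD N v ℓ)) h2F0)).add (my_hd_outer hφ (2*F) ((bD N u (ℓ+1) + bD N u (ℓ+2))) ((bD N v (ℓ+1) + bD N v (ℓ+2))) h2F0)).div_const 2)))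
  have hd2 : d2E (Eqce N K φ) (yF N F) u v = (↑N : ℝ)⁻¹ * ((∑ ℓ ∈ idx N \ aQce K, (deriv (deriv φ) (F) * bD N u ℓ * bD N v ℓ + deriv (deriv φ) (F) * bD N u (ℓ+1) * bD N v (ℓ+1) + deriv (deriv φ) (2*F) * (2*bD N u ℓ) * (2*bD N v ℓ) + deriv (deriv φ) (2*F) * (2*bD N u (ℓ+1)) * (2*bD N v (ℓ+1))) / 2) + ∑ ℓ ∈ aQce K, (deriv (deriv φ) (F) * bD N u ℓ * bD N v ℓ + deriv (deriv φ) (F) * bD N u (ℓ+1) * bD N v (ℓ+1) + deriv (deriv φ) (2*F) * (bD N u (ℓ-1) + bD N u ℓ) * (bD N v (ℓ-1) + bD N v ℓ) + deriv (deriv φ) (2*F) * (bD N u (ℓ+1) + bD N u (ℓ+2)) * (bD N v (ℓ+1) + bD N v (ℓ+2))) / 2) := by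
    simp only [d2E]
    have hEq : (fun s : ℝ => deriv (fun t : ℝ => Eqce N K φ (yF N F + s • u + t • v)) 0)
        =ᶠ[nhds (0:ℝ)] (fun s : ℝ => (↑N : ℝ)⁻¹ * ((∑ ℓ ∈ idx N \ aQce K, (deriv φ (F + s * bD N u ℓ) * bD N v ℓ + deriv φ (F + s * bD N u (ℓ+1)) * bD N v (ℓ+1) + deriv φ (2*F + s * (2*bD N u ℓ)) * (2*bD N v ℓ) + deriv φ (2*F + s * (2*bD N u (ℓ+1))) * (2*bD N v (ℓ+1))) / 2) + ∑ ℓ ∈ aQce K, (deriv φ (F + s * bD N u ℓ) * bD N v ℓ + deriv φ (F + s * bD N u (ℓ+1)) * bD N v (ℓ+1) + deriv φ (2*F + s * (bD N u (ℓ-1) + bD N u ℓ)) * (bD N v (ℓ-1) + bD N v ℓ) + deriv φ (2*F + s * (bD N u (ℓ+1) + bD N u (ℓ+2))) * (bD N v (ℓ+1) + bD N v (ℓ+2))) / 2)) := by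
      filter_upwards [Metric.ball_mem_nhds (0:ℝ) hδ] with s hs
      have hs' : |s| < δ := by rw [Metric.mem_ball, Real.dist_eq, sub_zero] at hs; exact hs
      have hfe : (fun t : ℝ => Eqce N K φ (yF N F + s • u + t • v)) =
          (fun t : ℝ => (↑N : ℝ)⁻¹ * ((∑ ℓ ∈ idx N \ aQce K, (φ ((F + s * bD N u ℓ) + t * bD N v ℓ) + φ ((F + s * bD N u (ℓ+1)) + t * bD N v (ℓ+1)) + φ ((2*F + s * (2*bD N u ℓ)) + t * (2*bD N v ℓ)) + φ ((2*F + s * (2*bD N u (ℓ+1))) + t * (2*bD N v (ℓ+1)))) / 2) + ∑ ℓ ∈ aQce K, (φ ((F + s * bD N u ℓ) + t * bD N v ℓ) + φ ((F + s * bD N u (ℓ+1)) + t * bD N v (ℓ+1)) + φ ((2*F + s * (bD N u (ℓ-1) + bD N u ℓ)) + t * (bD N v (ℓ-1) + bD N v ℓ)) + φ ((2*F + s * (bD N u (ℓ+1) + bD N u (ℓ+2))) + t * (bD N v (ℓ+1) + bD N v (ℓ+2)))) / 2)) := funext (fun t => hrep s t)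
      rw [hfe]
      exact (hinner s hs').deriv
    rw [hEq.deriv_eq]
    exact houter.deriv
  rw [hd2]
  set cF := deriv (deriv φ) F with hcF
  set c2F := deriv (deriv φ) (2*F) with hc2F
  have hAsub : aQce K ⊆ idx N := by
    intro x hx
    simp only [aQce, idx, Finset.mem_Icc] at hx ⊢
    omega
  set T := ∑ ℓ ∈ idx N, |bD N v ℓ| with hT
  have hwper : ∀ ℓ : ℤ, |bD N v (ℓ + 2*(N:ℤ))| = |bD N v ℓ| := fun ℓ => by rw [hVper]
  have hperUV : ∀ ℓ : ℤ, bD N u (ℓ + 2*(N:ℤ)) * bD N v (ℓ + 2*(N:ℤ)) = bD N u ℓ * bD N v ℓ :=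
    fun ℓ => by rw [hUper, hVper]
  have hshiftUV : ∑ ℓ ∈ idx N, bD N u (ℓ+1) * bD N v (ℓ+1) = ∑ ℓ ∈ idx N, bD N u ℓ * bD N v ℓ := by
    have := my_sum_shift_period hNpos (f := fun ℓ => bD N u ℓ * bD N v ℓ) hperUV
    beta_reduce at this
    exact this
  have hshiftw : ∑ ℓ ∈ idx N, |bD N v (ℓ+1)| = T := by
    have := my_sum_shift_period hNpos (f := fun ℓ => |bD N v ℓ|) hwper
    beta_reduce at this
    rw [this]
  have e1 : ∑ ℓ ∈ idx N \ aQce K, (cF * bD N u ℓ * bD N v ℓ + cF * bD N u (ℓ+1) * bD N v (ℓ+1)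
        + c2F * (2*bD N u ℓ) * (2*bD N v ℓ) + c2F * (2*bD N u (ℓ+1)) * (2*bD N v (ℓ+1))) / 2
      = cF * (∑ ℓ ∈ idx N \ aQce K, (bD N u ℓ * bD N v ℓ + bD N u (ℓ+1) * bD N v (ℓ+1)) / 2)
        + c2F * ∑ ℓ ∈ idx N \ aQce K, 2*(bD N u ℓ * bD N v ℓ + bD N u (ℓ+1) * bD N v (ℓ+1)) := by
    rw [Finset.mul_sum, Finset.mul_sum, ← Finset.sum_add_distrib]
    exact Finset.sum_congr rfl fun ℓ _ => by ring
  have e2 : ∑ ℓ ∈ aQce K, (cF * bD N u ℓ * bD N v ℓ + cF * bD N u (ℓ+1) * bD N v (ℓ+1)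
        + c2F * (bD N u (ℓ-1) + bD N u ℓ) * (bD N v (ℓ-1) + bD N v ℓ)
        + c2F * (bD N u (ℓ+1) + bD N u (ℓ+2)) * (bD N v (ℓ+1) + bD N v (ℓ+2))) / 2
      = cF * (∑ ℓ ∈ aQce K, (bD N u ℓ * bD N v ℓ + bD N u (ℓ+1) * bD N v (ℓ+1)) / 2)
        + c2F * ∑ ℓ ∈ aQce K, ((bD N u (ℓ-1) + bD N u ℓ) * (bD N v (ℓ-1) + bD N v ℓ)
            + (bD N u (ℓ+1) + bD N u (ℓ+2)) * (bD N v (ℓ+1) + bD N v (ℓ+2))) / 2 := by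
    rw [Finset.mul_sum, Finset.mul_sum, ← Finset.sum_add_distrib]
    exact Finset.sum_congr rfl fun ℓ _ => by ring
  have e3 : (∑ ℓ ∈ idx N \ aQce K, (bD N u ℓ * bD N v ℓ + bD N u (ℓ+1) * bD N v (ℓ+1)) / 2)
      + ∑ ℓ ∈ aQce K, (bD N u ℓ * bD N v ℓ + bD N u (ℓ+1) * bD N v (ℓ+1)) / 2
      = ∑ ℓ ∈ idx N, bD N u ℓ * bD N v ℓ := by
    rw [Finset.sum_sdiff hAsub]
    calc ∑ ℓ ∈ idx N, (bD N u ℓ * bD N v ℓ + bD N u (ℓ+1) * bD N v (ℓ+1)) / 2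
        = ((∑ ℓ ∈ idx N, bD N u ℓ * bD N v ℓ) + ∑ ℓ ∈ idx N, bD N u (ℓ+1) * bD N v (ℓ+1)) / 2 := by
          rw [← Finset.sum_div, Finset.sum_add_distrib]
      _ = ∑ ℓ ∈ idx N, bD N u ℓ * bD N v ℓ := by rw [hshiftUV]; ring
  have hiprod : iprod N (bD N u) (bD N v) = (N:ℝ)⁻¹ * ∑ ℓ ∈ idx N, bD N u ℓ * bD N v ℓ := rfl
  rw [e1, e2]
  have hcollect : (N:ℝ)⁻¹ * ((cF * (∑ ℓ ∈ idx N \ aQce K, (bD N u ℓ * bD N v ℓ + bD N u (ℓ+1) * bD N v (ℓ+1)) / 2)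
        + c2F * ∑ ℓ ∈ idx N \ aQce K, 2*(bD N u ℓ * bD N v ℓ + bD N u (ℓ+1) * bD N v (ℓ+1)))
      + (cF * (∑ ℓ ∈ aQce K, (bD N u ℓ * bD N v ℓ + bD N u (ℓ+1) * bD N v (ℓ+1)) / 2)
        + c2F * ∑ ℓ ∈ aQce K, ((bD N u (ℓ-1) + bD N u ℓ) * (bD N v (ℓ-1) + bD N v ℓ)
            + (bD N u (ℓ+1) + bD N u (ℓ+2)) * (bD N v (ℓ+1) + bD N v (ℓ+2))) / 2))
      = cF * iprod N (bD N u) (bD N v)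
        + c2F * ((N:ℝ)⁻¹ * ((∑ ℓ ∈ idx N \ aQce K, 2*(bD N u ℓ * bD N v ℓ + bD N u (ℓ+1) * bD N v (ℓ+1)))
          + ∑ ℓ ∈ aQce K, ((bD N u (ℓ-1) + bD N u ℓ) * (bD N v (ℓ-1) + bD N v ℓ)
            + (bD N u (ℓ+1) + bD N u (ℓ+2)) * (bD N v (ℓ+1) + bD N v (ℓ+2))) / 2)) := by
    rw [hiprod, ← e3]
    ring
  rw [hcollect, add_sub_cancel_left, abs_mul]
  have hfin : |(N:ℝ)⁻¹ * ((∑ ℓ ∈ idx N \ aQce K, 2*(bD N u ℓ * bD N v ℓ + bD N u (ℓ+1) * bD N v (ℓ+1)))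
      + ∑ ℓ ∈ aQce K, ((bD N u (ℓ-1) + bD N u ℓ) * (bD N v (ℓ-1) + bD N v ℓ)
        + (bD N u (ℓ+1) + bD N u (ℓ+2)) * (bD N v (ℓ+1) + bD N v (ℓ+2))) / 2)|
      ≤ 5 * Un * nl1 N (bD N v) := by
    have hterm1 : ∀ ℓ ∈ idx N \ aQce K, |2*(bD N u ℓ * bD N v ℓ + bD N u (ℓ+1) * bD N v (ℓ+1))|
        ≤ Un*(2*|bD N v ℓ| + 2*|bD N v (ℓ+1)|) := by
      intro ℓ _
      have t1 : |bD N u ℓ * bD N v ℓ| ≤ Un * |bD N v ℓ| := by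
        rw [abs_mul]; exact mul_le_mul_of_nonneg_right (hUb ℓ) (abs_nonneg _)
      have t2 : |bD N u (ℓ+1) * bD N v (ℓ+1)| ≤ Un * |bD N v (ℓ+1)| := by
        rw [abs_mul]; exact mul_le_mul_of_nonneg_right (hUb (ℓ+1)) (abs_nonneg _)
      have h := abs_add_le (bD N u ℓ * bD N v ℓ) (bD N u (ℓ+1) * bD N v (ℓ+1))
      rw [abs_mul, abs_two]
      linarith
    have hterm2 : ∀ ℓ ∈ aQce K, |((bD N u (ℓ-1) + bD N u ℓ) * (bD N v (ℓ-1) + bD N v ℓ)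
          + (bD N u (ℓ+1) + bD N u (ℓ+2)) * (bD N v (ℓ+1) + bD N v (ℓ+2))) / 2|
        ≤ Un*(|bD N v (ℓ-1)| + |bD N v ℓ| + |bD N v (ℓ+1)| + |bD N v (ℓ+2)|) := by
      intro ℓ _
      have hQ : |bD N v (ℓ-1) + bD N v ℓ| ≤ |bD N v (ℓ-1)| + |bD N v ℓ| := abs_add_le _ _
      have hQ' : |bD N v (ℓ+1) + bD N v (ℓ+2)| ≤ |bD N v (ℓ+1)| + |bD N v (ℓ+2)| := abs_add_le _ _
      have h1 : |(bD N u (ℓ-1) + bD N u ℓ) * (bD N v (ℓ-1) + bD N v ℓ)|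
          ≤ (2*Un)*(|bD N v (ℓ-1)| + |bD N v ℓ|) := by
        rw [abs_mul]
        exact mul_le_mul (hb3 ℓ) hQ (abs_nonneg _) (by linarith)
      have h2 : |(bD N u (ℓ+1) + bD N u (ℓ+2)) * (bD N v (ℓ+1) + bD N v (ℓ+2))|
          ≤ (2*Un)*(|bD N v (ℓ+1)| + |bD N v (ℓ+2)|) := by
        rw [abs_mul]
        exact mul_le_mul (hb4 ℓ) hQ' (abs_nonneg _) (by linarith)
      have habs := abs_add_le ((bD N u (ℓ-1) + bD N u ℓ) * (bD N v (ℓ-1) + bD N v ℓ))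
        ((bD N u (ℓ+1) + bD N u (ℓ+2)) * (bD N v (ℓ+1) + bD N v (ℓ+2)))
      rw [abs_div, abs_two]
      linarith
    have hsumb : |(∑ ℓ ∈ idx N \ aQce K, 2*(bD N u ℓ * bD N v ℓ + bD N u (ℓ+1) * bD N v (ℓ+1)))
        + ∑ ℓ ∈ aQce K, ((bD N u (ℓ-1) + bD N u ℓ) * (bD N v (ℓ-1) + bD N v ℓ)
          + (bD N u (ℓ+1) + bD N u (ℓ+2)) * (bD N v (ℓ+1) + bD N v (ℓ+2))) / 2|
        ≤ (∑ ℓ ∈ idx N \ aQce K, Un*(2*|bD N v ℓ| + 2*|bD N v (ℓ+1)|))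
          + ∑ ℓ ∈ aQce K, Un*(|bD N v (ℓ-1)| + |bD N v ℓ| + |bD N v (ℓ+1)| + |bD N v (ℓ+2)|) :=
      (abs_add_le _ _).trans (add_le_add
        ((Finset.abs_sum_le_sum_abs _ _).trans (Finset.sum_le_sum hterm1))
        ((Finset.abs_sum_le_sum_abs _ _).trans (Finset.sum_le_sum hterm2)))
    -- the combinatorial count
    have c0 : ∑ ℓ ∈ idx N \ aQce K, |bD N v ℓ| = T - ∑ ℓ ∈ aQce K, |bD N v ℓ| :=
      Finset.sum_sdiff_eq_sub hAsub
    have c1 : ∑ ℓ ∈ idx N \ aQce K, |bD N v (ℓ+1)| = T - ∑ ℓ ∈ aQce K, |bD N v (ℓ+1)| := by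
      rw [Finset.sum_sdiff_eq_sub (f := fun ℓ => |bD N v (ℓ+1)|) hAsub, hshiftw]
    have a_1 : ∑ ℓ ∈ aQce K, |bD N v (ℓ-1)| = ∑ ℓ ∈ Finset.Icc (-(K:ℤ)-1) ((K:ℤ)-1), |bD N v ℓ| := by
      rw [aQce]
      calc ∑ ℓ ∈ Finset.Icc (-(K:ℤ)) (K:ℤ), |bD N v (ℓ-1)|
          = ∑ ℓ ∈ Finset.Icc (-(K:ℤ)) (K:ℤ), |bD N v (ℓ+(-1))| :=
            Finset.sum_congr rfl fun ℓ _ => by rw [sub_eq_add_neg]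
        _ = ∑ ℓ ∈ Finset.Icc (-(K:ℤ)+(-1)) ((K:ℤ)+(-1)), |bD N v ℓ| := my_sum_shift (fun ℓ => |bD N v ℓ|) (-(K:ℤ)) (K:ℤ) (-1)
        _ = ∑ ℓ ∈ Finset.Icc (-(K:ℤ)-1) ((K:ℤ)-1), |bD N v ℓ| := by
            rw [show (-(K:ℤ)+(-1)) = -(K:ℤ)-1 by ring, show ((K:ℤ)+(-1)) = (K:ℤ)-1 by ring]
    have a1 : ∑ ℓ ∈ aQce K, |bD N v (ℓ+1)| = ∑ ℓ ∈ Finset.Icc (-(K:ℤ)+1) ((K:ℤ)+1), |bD N v ℓ| := by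
      rw [aQce]; exact my_sum_shift (fun ℓ => |bD N v ℓ|) (-(K:ℤ)) (K:ℤ) 1
    have a2 : ∑ ℓ ∈ aQce K, |bD N v (ℓ+2)| = ∑ ℓ ∈ Finset.Icc (-(K:ℤ)+2) ((K:ℤ)+2), |bD N v ℓ| := by
      rw [aQce]; exact my_sum_shift (fun ℓ => |bD N v ℓ|) (-(K:ℤ)) (K:ℤ) 2
    have p1 : ∑ ℓ ∈ Finset.Icc (-(K:ℤ)-1) ((K:ℤ)-1), |bD N v ℓ|
        = |bD N v (-(K:ℤ)-1)| + ∑ ℓ ∈ Finset.Icc (-(K:ℤ)-1+1) ((K:ℤ)-1), |bD N v ℓ| :=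
      my_sum_peel_bot _ _ _ (by omega)
    rw [show (-(K:ℤ)-1+1) = -(K:ℤ) by ring] at p1
    have p2 : ∑ ℓ ∈ aQce K, |bD N v ℓ|
        = (∑ ℓ ∈ Finset.Icc (-(K:ℤ)) ((K:ℤ)-1), |bD N v ℓ|) + |bD N v (K:ℤ)| := by
      rw [aQce]; exact my_sum_peel_top _ _ _ (by omega)
    have p3 : ∑ ℓ ∈ Finset.Icc (-(K:ℤ)+2) ((K:ℤ)+2), |bD N v ℓ|
        = (∑ ℓ ∈ Finset.Icc (-(K:ℤ)+2) ((K:ℤ)+2-1), |bD N v ℓ|) + |bD N v ((K:ℤ)+2)| :=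
      my_sum_peel_top _ _ _ (by omega)
    rw [show ((K:ℤ)+2-1) = (K:ℤ)+1 by ring] at p3
    have p4 : ∑ ℓ ∈ Finset.Icc (-(K:ℤ)+1) ((K:ℤ)+1), |bD N v ℓ|
        = |bD N v (-(K:ℤ)+1)| + ∑ ℓ ∈ Finset.Icc (-(K:ℤ)+1+1) ((K:ℤ)+1), |bD N v ℓ| :=
      my_sum_peel_bot _ _ _ (by omega)
    rw [show (-(K:ℤ)+1+1) = -(K:ℤ)+2 by ring] at p4
    have hpair : |bD N v (-(K:ℤ)-1)| + |bD N v ((K:ℤ)+2)| ≤ T := by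
      have hne : (-(K:ℤ)-1) ≠ (K:ℤ)+2 := by omega
      have hsub : ({-(K:ℤ)-1, (K:ℤ)+2} : Finset ℤ) ⊆ idx N := by
        intro x hx
        simp only [Finset.mem_insert, Finset.mem_singleton, idx, Finset.mem_Icc] at hx ⊢
        omega
      calc |bD N v (-(K:ℤ)-1)| + |bD N v ((K:ℤ)+2)|
          = ∑ ℓ ∈ ({-(K:ℤ)-1, (K:ℤ)+2} : Finset ℤ), |bD N v ℓ| := (Finset.sum_pair (f := fun ℓ => |bD N v ℓ|) hne).symm
        _ ≤ T := Finset.sum_le_sum_of_subset_of_nonneg hsub (fun i _ _ => abs_nonneg _)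
    have hS : (∑ ℓ ∈ idx N \ aQce K, Un*(2*|bD N v ℓ| + 2*|bD N v (ℓ+1)|))
        + ∑ ℓ ∈ aQce K, Un*(|bD N v (ℓ-1)| + |bD N v ℓ| + |bD N v (ℓ+1)| + |bD N v (ℓ+2)|)
        ≤ Un * (5 * T) := by
      have s1 : ∑ ℓ ∈ idx N \ aQce K, Un*(2*|bD N v ℓ| + 2*|bD N v (ℓ+1)|)
          = Un * (2*(∑ ℓ ∈ idx N \ aQce K, |bD N v ℓ|) + 2*∑ ℓ ∈ idx N \ aQce K, |bD N v (ℓ+1)|) := by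
        rw [← Finset.mul_sum]
        congr 1
        rw [Finset.sum_add_distrib, Finset.mul_sum, Finset.mul_sum]
      have s2 : ∑ ℓ ∈ aQce K, Un*(|bD N v (ℓ-1)| + |bD N v ℓ| + |bD N v (ℓ+1)| + |bD N v (ℓ+2)|)
          = Un * ((∑ ℓ ∈ aQce K, |bD N v (ℓ-1)|) + (∑ ℓ ∈ aQce K, |bD N v ℓ|)
            + (∑ ℓ ∈ aQce K, |bD N v (ℓ+1)|) + ∑ ℓ ∈ aQce K, |bD N v (ℓ+2)|) := by
        rw [← Finset.mul_sum]
        congr 1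
        rw [Finset.sum_add_distrib, Finset.sum_add_distrib, Finset.sum_add_distrib]
      rw [s1, s2, ← mul_add]
      apply mul_le_mul_of_nonneg_left _ hUn0
      have hw1 : 0 ≤ |bD N v (K:ℤ)| := abs_nonneg _
      have hw2 : 0 ≤ |bD N v (-(K:ℤ)+1)| := abs_nonneg _
      linarith [c0, c1, a_1, a1, a2, p1, p2, p3, p4, hpair]
    have habs2 : |(N:ℝ)⁻¹| = (N:ℝ)⁻¹ := abs_of_pos (inv_pos.2 hNR)
    have hnl1 : nl1 N (bD N v) = (N:ℝ)⁻¹ * T := by rw [hT]; rfl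
    rw [abs_mul, habs2, hnl1]
    calc (N:ℝ)⁻¹ * |(∑ ℓ ∈ idx N \ aQce K, 2*(bD N u ℓ * bD N v ℓ + bD N u (ℓ+1) * bD N v (ℓ+1)))
        + ∑ ℓ ∈ aQce K, ((bD N u (ℓ-1) + bD N u ℓ) * (bD N v (ℓ-1) + bD N v ℓ)
          + (bD N u (ℓ+1) + bD N u (ℓ+2)) * (bD N v (ℓ+1) + bD N v (ℓ+2))) / 2|
        ≤ (N:ℝ)⁻¹ * (Un * (5 * T)) := by
          apply mul_le_mul_of_nonneg_left _ (inv_pos.2 hNR).le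
          exact hsumb.trans hS
      _ = 5 * Un * ((N:ℝ)⁻¹ * T) := by ring
  calc |c2F| * |(N:ℝ)⁻¹ * ((∑ ℓ ∈ idx N \ aQce K, 2*(bD N u ℓ * bD N v ℓ + bD N u (ℓ+1) * bD N v (ℓ+1)))
      + ∑ ℓ ∈ aQce K, ((bD N u (ℓ-1) + bD N u ℓ) * (bD N v (ℓ-1) + bD N v ℓ)
        + (bD N u (ℓ+1) + bD N u (ℓ+2)) * (bD N v (ℓ+1) + bD N v (ℓ+2))) / 2)|
      ≤ |c2F| * (5 * Un * nl1 N (bD N v)) := mul_le_mul_of_nonneg_left hfin (abs_nonneg _)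
    _ = 5 * |c2F| * Un * nl1 N (bD N v) := by ring
end
end

section
/- For every linear functional T on 𝒰 there exists a unique u ∈ 𝒰 such that ⟨u', v'⟩ = T[v] for all v ∈ 𝒰, and this u satisfies ‖u'‖_{ℓ∞} ≤ 2 ‖T‖_{𝒰^{−1,∞}}. -/
open Finset Real

noncomputable section

namespace Stmt13

/-- Representative of `ℓ` modulo `2N` lying in `idx N`. -/
def toIdx (N : ℕ) (ℓ : ℤ) : ℤ := ℓ - 2 * N * ((ℓ + N - 1) / (2 * N))

lemma toIdx_mem (N : ℕ) (hN : 0 < N) (ℓ : ℤ) : toIdx N ℓ ∈ idx N := by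
  have hb : (0:ℤ) < 2 * N := by positivity
  have h1 := Int.ediv_mul_le (ℓ + N - 1) (ne_of_gt hb)
  have h2 := Int.lt_ediv_add_one_mul_self (ℓ + N - 1) hb
  simp only [idx, Finset.mem_Icc, toIdx]
  constructor <;> nlinarith [h1, h2]

lemma toIdx_eq_self (N : ℕ) {ℓ : ℤ} (h : ℓ ∈ idx N) : toIdx N ℓ = ℓ := by
  simp only [idx, Finset.mem_Icc] at h
  have : (ℓ + N - 1) / (2 * N) = 0 := by
    apply Int.ediv_eq_zero_of_lt <;> omega
  simp [toIdx, this]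

lemma toIdx_period (N : ℕ) (hN : 0 < N) (ℓ : ℤ) : toIdx N (ℓ + 2 * N) = toIdx N ℓ := by
  have hb : (2 * N : ℤ) ≠ 0 := by positivity
  have : (ℓ + 2 * N + N - 1) = (ℓ + N - 1) + 1 * (2 * N) := by ring
  rw [toIdx, this, Int.add_mul_ediv_right _ _ hb, toIdx]
  ring

lemma periodic_eval {N : ℕ} {u : ℤ → ℝ} (hp : ∀ ℓ : ℤ, u (ℓ + 2 * (N : ℤ)) = u ℓ)
    (ℓ : ℤ) (k : ℤ) : u (ℓ + 2 * N * k) = u ℓ := by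
  induction k using Int.induction_on with
  | zero => simp
  | succ n ih =>
      have := hp (ℓ + 2 * N * n)
      rw [show ℓ + 2 * (N:ℤ) * (n + 1) = ℓ + 2 * N * n + 2 * N by ring, this, ih]
  | pred n ih =>
      have h := hp (ℓ + 2 * N * (-(n:ℤ) - 1))
      rw [show ℓ + 2 * (N:ℤ) * (-(n:ℤ) - 1) + 2 * N = ℓ + 2 * N * (-(n:ℤ)) by ring] at h
      rw [← h]
      exact ih

lemma periodic_toIdx {N : ℕ} {u : ℤ → ℝ} (hp : ∀ ℓ : ℤ, u (ℓ + 2 * (N : ℤ)) = u ℓ)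
    (ℓ : ℤ) : u ℓ = u (toIdx N ℓ) := by
  have this2 := periodic_eval hp (toIdx N ℓ) ((ℓ + N - 1) / (2 * N))
  rw [show toIdx N ℓ + 2 * N * ((ℓ + N - 1) / (2 * N)) = ℓ by rw [toIdx]; ring] at this2
  exact this2

end Stmt13
namespace Stmt13

lemma card_idx (N : ℕ) : (idx N).card = 2 * N := by
  simp only [idx, Int.card_Icc]
  omega

/-- 𝒰 as a submodule. -/
def uSub (N : ℕ) : Submodule ℝ (ℤ → ℝ) where
  carrier := uSet N
  add_mem' := by
    rintro u v ⟨hu1, hu2⟩ ⟨hv1, hv2⟩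
    refine ⟨fun ℓ => ?_, ?_⟩
    · simp [hu1 ℓ, hv1 ℓ]
    · simp [Finset.sum_add_distrib, hu2, hv2]
  zero_mem' := ⟨fun ℓ => rfl, by simp⟩
  smul_mem' := by
    rintro c u ⟨hu1, hu2⟩
    refine ⟨fun ℓ => ?_, ?_⟩
    · simp [hu1 ℓ]
    · simp [← Finset.mul_sum, hu2]

lemma mem_uSub {N : ℕ} {u : ℤ → ℝ} : u ∈ uSub N ↔ u ∈ uSet N := Iff.rfl

/-- Extension-by-periodicity map. -/
def extFun (N : ℕ) (hN : 0 < N) : ({ℓ : ℤ // ℓ ∈ idx N} → ℝ) →ₗ[ℝ] (ℤ → ℝ) where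
  toFun := fun f ℓ => f ⟨toIdx N ℓ, toIdx_mem N hN ℓ⟩
  map_add' := fun f g => rfl
  map_smul' := fun c f => rfl

lemma uSub_le_range (N : ℕ) (hN : 0 < N) : uSub N ≤ LinearMap.range (extFun N hN) := by
  rintro u ⟨hu1, hu2⟩
  exact ⟨fun k => u k.1, funext fun ℓ => (periodic_toIdx hu1 ℓ).symm⟩

lemma uSub_fd (N : ℕ) (hN : 0 < N) : FiniteDimensional ℝ ↥(uSub N) :=
  Submodule.finiteDimensional_of_le (uSub_le_range N hN)

/-- Telescoping sum. -/
lemma telescope (f : ℤ → ℝ) (a : ℤ) : ∀ b : ℤ, a - 1 ≤ b →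
    ∑ ℓ ∈ Finset.Icc a b, (f ℓ - f (ℓ - 1)) = f b - f (a - 1) := by
  refine Int.le_induction ?_ ?_
  · simp [show Finset.Icc a (a-1) = ∅ by apply Finset.Icc_eq_empty; omega]
  · intro n hn ih
    have hins : Finset.Icc a (n + 1) = insert (n + 1) (Finset.Icc a n) := by
      ext x; simp only [Finset.mem_Icc, Finset.mem_insert]; omega
    rw [hins, Finset.sum_insert (by simp only [Finset.mem_Icc]; omega), ih]
    ring_nf

lemma sum_bD_eq_zero {N : ℕ} (hN : 0 < N) {u : ℤ → ℝ} (hu : u ∈ uSet N) :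
    ∑ ℓ ∈ idx N, bD N u ℓ = 0 := by
  obtain ⟨hp, _⟩ := hu
  have h1 : ∑ ℓ ∈ idx N, bD N u ℓ = (N:ℝ) * ∑ ℓ ∈ idx N, (u ℓ - u (ℓ - 1)) := by
    rw [Finset.mul_sum]; rfl
  have h2 : ∑ ℓ ∈ idx N, (u ℓ - u (ℓ - 1)) = u N - u (-(N:ℤ) + 1 - 1) := by
    apply telescope u (-(N:ℤ) + 1) (N:ℤ) (by omega)
  have h3 : u (-(N:ℤ) + 1 - 1) = u N := by
    have := hp (-(N:ℤ))
    rw [show -(N:ℤ) + 2 * N = (N:ℤ) by ring] at this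
    rw [show -(N:ℤ) + 1 - 1 = -(N:ℤ) by ring, ← this]
  rw [h1, h2, h3]
  ring

end Stmt13
namespace Stmt13

/-- The Dirichlet bilinear form on all sequences. -/
def gForm (N : ℕ) : LinearMap.BilinForm ℝ (ℤ → ℝ) :=
  LinearMap.mk₂ ℝ (fun u v => iprod N (bD N u) (bD N v))
    (by
      intro u u' v
      simp only [iprod, bD, Pi.add_apply, ← mul_add, ← Finset.sum_add_distrib]
      congr 1
      apply Finset.sum_congr rfl
      intros; ring)
    (by
      intro c u v
      simp only [iprod, bD, Pi.smul_apply, smul_eq_mul]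
      rw [Finset.mul_sum, mul_left_comm c, Finset.mul_sum, Finset.mul_sum]
      exact Finset.sum_congr rfl fun x _ => by ring)
    (by
      intro u v v'
      simp only [iprod, bD, Pi.add_apply, ← mul_add, ← Finset.sum_add_distrib]
      congr 1
      apply Finset.sum_congr rfl
      intros; ring)
    (by
      intro c u v
      simp only [iprod, bD, Pi.smul_apply, smul_eq_mul]
      rw [Finset.mul_sum, mul_left_comm c, Finset.mul_sum, Finset.mul_sum]
      exact Finset.sum_congr rfl fun x _ => by ring)

lemma gForm_apply (N : ℕ) (u v : ℤ → ℝ) : gForm N u v = iprod N (bD N u) (bD N v) := rfl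

/-- A mean-zero periodic sequence with vanishing backward difference on `idx` is zero. -/
lemma eq_zero_of_bD_zero {N : ℕ} (hN : 0 < N) {u : ℤ → ℝ} (hu : u ∈ uSet N)
    (hd : ∀ ℓ ∈ idx N, bD N u ℓ = 0) : u = 0 := by
  obtain ⟨hp, hm⟩ := hu
  have hNne : (N:ℝ) ≠ 0 := Nat.cast_ne_zero.mpr hN.ne'
  have hstep : ∀ ℓ ∈ idx N, u ℓ = u (ℓ - 1) := by
    intro ℓ hℓ
    have := hd ℓ hℓ
    simp only [bD] at this
    have := mul_eq_zero.mp this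
    rcases this with h | h
    · exact absurd h hNne
    · linarith [sub_eq_zero.mp h]
  have hconst : ∀ ℓ : ℤ, -(N:ℤ) ≤ ℓ → ℓ ≤ (N:ℤ) → u ℓ = u (-(N:ℤ)) := by
    refine Int.le_induction ?_ ?_
    · intros; rfl
    · intro n hn ih h
      have hmem : n + 1 ∈ idx N := by simp only [idx, Finset.mem_Icc]; omega
      rw [hstep (n+1) hmem, show n + 1 - 1 = n by ring, ih (by omega)]
  have hconst' : ∀ ℓ ∈ idx N, u ℓ = u (-(N:ℤ)) := by
    intro ℓ hℓ
    simp only [idx, Finset.mem_Icc] at hℓ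
    exact hconst ℓ (by omega) (by omega)
  have hsum : ∑ ℓ ∈ idx N, u ℓ = (2 * N : ℝ) * u (-(N:ℤ)) := by
    rw [Finset.sum_congr rfl hconst', Finset.sum_const, card_idx]
    push_cast; ring
  have hz : u (-(N:ℤ)) = 0 := by
    rw [hm] at hsum
    have h2N : (2 * N : ℝ) ≠ 0 := by positivity
    field_simp at hsum
    exact (mul_eq_zero.mp hsum.symm).resolve_left h2N
  funext ℓ
  rw [periodic_toIdx hp ℓ, hconst' _ (toIdx_mem N hN ℓ), hz]
  rfl

/-- Restricted bilinear form is nondegenerate. -/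
lemma gForm_nondeg (N : ℕ) (hN : 0 < N) :
    ((gForm N).restrict (uSub N)).Nondegenerate := by
  haveI := uSub_fd N hN
  refine LinearMap.BilinForm.Nondegenerate.ofSeparatingLeft ?_
  intro u hu
  have h := hu u
  rw [show (((gForm N).restrict (uSub N)) u) u = iprod N (bD N (u:ℤ→ℝ)) (bD N (u:ℤ→ℝ)) from rfl] at h
  have hNpos : (0:ℝ) < (N:ℝ)⁻¹ := by positivity
  have hsum : ∑ ℓ ∈ idx N, bD N (u:ℤ→ℝ) ℓ * bD N (u:ℤ→ℝ) ℓ = 0 := by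
    rcases mul_eq_zero.mp h with h' | h'
    · exact absurd h' (ne_of_gt hNpos)
    · exact h'
  have hzero : ∀ ℓ ∈ idx N, bD N (u:ℤ→ℝ) ℓ = 0 := by
    intro ℓ hℓ
    have := (Finset.sum_eq_zero_iff_of_nonneg (fun i _ => mul_self_nonneg (bD N (u:ℤ→ℝ) i))).mp hsum ℓ hℓ
    exact mul_self_eq_zero.mp this
  exact Subtype.ext (eq_zero_of_bD_zero hN u.2 hzero)

end Stmt13
namespace Stmt13

/-- Test function: a two-level periodic profile. -/
def vtest (N : ℕ) (a b : ℤ) (δ : ℝ) : ℤ → ℝ :=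
  fun ℓ => (if a ≤ toIdx N ℓ ∧ toIdx N ℓ ≤ b - 1 then δ else 0) - (b - a : ℤ) * δ / (2 * N)

lemma vtest_mem {N : ℕ} (hN : 0 < N) {a b : ℤ} (ha : a ∈ idx N) (hb : b ∈ idx N)
    (hab : a < b) (δ : ℝ) : vtest N a b δ ∈ uSet N := by
  constructor
  · intro ℓ
    simp only [vtest, toIdx_period N hN ℓ]
  · have hIcc : Finset.Icc a (b-1) ⊆ idx N := by
      intro x hx
      simp only [idx, Finset.mem_Icc] at *
      omega
    have hsum1 : ∑ ℓ ∈ idx N, (if a ≤ toIdx N ℓ ∧ toIdx N ℓ ≤ b - 1 then δ else 0)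
        = ∑ ℓ ∈ Finset.Icc a (b-1), δ := by
      rw [← Finset.sum_subset hIcc]
      · apply Finset.sum_congr rfl
        intro x hx
        rw [toIdx_eq_self N (hIcc hx)]
        simp only [Finset.mem_Icc] at hx
        rw [if_pos ⟨hx.1, hx.2⟩]
      · intro x hx hnx
        rw [toIdx_eq_self N hx, if_neg]
        simp only [Finset.mem_Icc] at hnx
        omega
    simp only [vtest, Finset.sum_sub_distrib, hsum1, Finset.sum_const, card_idx, Int.card_Icc]
    have hZ : ((b - 1 + 1 - a).toNat : ℤ) = b - a := by omega
    have h1 : ((b - 1 + 1 - a).toNat : ℝ) = (b : ℝ) - a := by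
      exact_mod_cast congrArg (Int.cast : ℤ → ℝ) hZ
    have h2N : (2 * N : ℝ) ≠ 0 := by positivity
    simp only [nsmul_eq_mul, h1]
    push_cast
    field_simp
    ring

lemma toIdx_negN (N : ℕ) (hN : 0 < N) : toIdx N (-(N:ℤ)) = N := by
  have := toIdx_period N hN (-(N:ℤ))
  rw [show -(N:ℤ) + 2 * N = (N:ℤ) by ring] at this
  rw [← this, toIdx_eq_self N (by simp only [idx, Finset.mem_Icc]; omega)]

lemma bD_vtest {N : ℕ} (hN : 0 < N) {a b : ℤ} (ha : a ∈ idx N) (hb : b ∈ idx N)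
    (hab : a < b) (δ : ℝ) (ℓ : ℤ) (hℓ : ℓ ∈ idx N) :
    bD N (vtest N a b δ) ℓ = if ℓ = a then (N:ℝ) * δ else if ℓ = b then -((N:ℝ) * δ) else 0 := by
  simp only [idx, Finset.mem_Icc] at ha hb hℓ
  have hℓself : toIdx N ℓ = ℓ := toIdx_eq_self N (by simp only [idx, Finset.mem_Icc]; omega)
  rcases eq_or_lt_of_le hℓ.1 with h1 | h1
  · -- ℓ = -N + 1, previous point wraps to N
    have hprev : toIdx N (ℓ - 1) = (N:ℤ) := by
      rw [show ℓ - 1 = -(N:ℤ) by omega]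
      exact toIdx_negN N hN
    simp only [bD, vtest, hℓself, hprev]
    split_ifs <;> first | ring1 | (exfalso; omega)
  · have hprev : toIdx N (ℓ - 1) = ℓ - 1 :=
      toIdx_eq_self N (by simp only [idx, Finset.mem_Icc]; omega)
    simp only [bD, vtest, hℓself, hprev]
    split_ifs <;> first | ring1 | (exfalso; omega)

end Stmt13
namespace Stmt13

lemma sum_support_pair {N : ℕ} {a b : ℤ} (ha : a ∈ idx N) (hb : b ∈ idx N) (hab : a ≠ b)
    (F : ℤ → ℝ) (hF : ∀ ℓ ∈ idx N, ℓ ≠ a → ℓ ≠ b → F ℓ = 0) :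
    ∑ ℓ ∈ idx N, F ℓ = F a + F b := by
  have hsub : ({a, b} : Finset ℤ) ⊆ idx N := by
    intro x hx
    simp only [Finset.mem_insert, Finset.mem_singleton] at hx
    rcases hx with rfl | rfl <;> assumption
  rw [← Finset.sum_subset hsub]
  · exact Finset.sum_pair hab
  · intro x hx hnx
    simp only [Finset.mem_insert, Finset.mem_singleton] at hnx
    push_neg at hnx
    exact hF x hx hnx.1 hnx.2

lemma nl1_bD_vtest {N : ℕ} (hN : 0 < N) {a b : ℤ} (ha : a ∈ idx N) (hb : b ∈ idx N)
    (hab : a < b) (δ : ℝ) : nl1 N (bD N (vtest N a b δ)) = 2 * |δ| := by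
  have habs : ∀ ℓ ∈ idx N, |bD N (vtest N a b δ) ℓ|
      = if ℓ = a then (N:ℝ) * |δ| else if ℓ = b then (N:ℝ) * |δ| else 0 := by
    intro ℓ hℓ
    rw [bD_vtest hN ha hb hab δ ℓ hℓ]
    have hNnn : (0:ℝ) ≤ (N:ℝ) := Nat.cast_nonneg N
    split_ifs <;> simp [abs_mul, abs_of_nonneg hNnn]
  rw [nl1, Finset.sum_congr rfl habs,
    sum_support_pair ha hb (ne_of_lt hab) _ (by intro ℓ _ h1 h2; rw [if_neg h1, if_neg h2])]
  rw [if_pos rfl, if_neg (ne_of_gt hab), if_pos rfl]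
  have hNne : (N:ℝ) ≠ 0 := Nat.cast_ne_zero.mpr hN.ne'
  field_simp
  ring

lemma iprod_bD_vtest {N : ℕ} (hN : 0 < N) {a b : ℤ} (ha : a ∈ idx N) (hb : b ∈ idx N)
    (hab : a < b) (δ : ℝ) (g : ℤ → ℝ) :
    iprod N g (bD N (vtest N a b δ)) = δ * (g a - g b) := by
  have hterm : ∀ ℓ ∈ idx N, g ℓ * bD N (vtest N a b δ) ℓ
      = if ℓ = a then g a * ((N:ℝ) * δ) else if ℓ = b then -(g b * ((N:ℝ) * δ)) else 0 := by
    intro ℓ hℓ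
    rw [bD_vtest hN ha hb hab δ ℓ hℓ]
    split_ifs with h1 h2
    · rw [h1]
    · rw [h2]; ring
    · ring
  rw [iprod, Finset.sum_congr rfl hterm,
    sum_support_pair ha hb (ne_of_lt hab) _ (by intro ℓ _ h1 h2; rw [if_neg h1, if_neg h2])]
  rw [if_pos rfl, if_neg (ne_of_gt hab), if_pos rfl]
  have hNne : (N:ℝ) ≠ 0 := Nat.cast_ne_zero.mpr hN.ne'
  field_simp
  ring

lemma exists_nlinf_max {N : ℕ} (hN : 0 < N) (g : ℤ → ℝ) :
    ∃ ℓ₀ ∈ idx N, (∀ ℓ ∈ idx N, |g ℓ| ≤ |g ℓ₀|) ∧ nlinf N g = |g ℓ₀| := by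
  have hne : (idx N).Nonempty := ⟨(N:ℤ), by simp only [idx, Finset.mem_Icc]; omega⟩
  obtain ⟨ℓ₀, h₀, hmax⟩ := Finset.exists_max_image (idx N) (fun ℓ => |g ℓ|) hne
  refine ⟨ℓ₀, h₀, hmax, ?_⟩
  haveI hnonempty : Nonempty {ℓ : ℤ // ℓ ∈ idx N} := ⟨⟨ℓ₀, h₀⟩⟩
  rw [nlinf]
  apply le_antisymm
  · exact ciSup_le fun ℓ => hmax ℓ.1 ℓ.2
  · exact le_ciSup (Set.Finite.bddAbove (Set.finite_range fun ℓ : {ℓ : ℤ // ℓ ∈ idx N} => |g ℓ.1|)) (⟨ℓ₀, h₀⟩ : {ℓ : ℤ // ℓ ∈ idx N})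

lemma iprod_le_nlinf_mul {N : ℕ} (hN : 0 < N) (g h : ℤ → ℝ) (M : ℝ)
    (hM : ∀ ℓ ∈ idx N, |g ℓ| ≤ M) : iprod N g h ≤ M * nl1 N h := by
  have hNinv : (0:ℝ) ≤ (N:ℝ)⁻¹ := by positivity
  rw [iprod, nl1]
  have hsum : ∑ ℓ ∈ idx N, g ℓ * h ℓ ≤ ∑ ℓ ∈ idx N, M * |h ℓ| := by
    apply Finset.sum_le_sum
    intro ℓ hℓ
    calc g ℓ * h ℓ ≤ |g ℓ * h ℓ| := le_abs_self _
      _ = |g ℓ| * |h ℓ| := abs_mul _ _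
      _ ≤ M * |h ℓ| := mul_le_mul_of_nonneg_right (hM ℓ hℓ) (abs_nonneg _)
  calc (N:ℝ)⁻¹ * ∑ ℓ ∈ idx N, g ℓ * h ℓ ≤ (N:ℝ)⁻¹ * ∑ ℓ ∈ idx N, M * |h ℓ| :=
        mul_le_mul_of_nonneg_left hsum hNinv
    _ = M * ((N:ℝ)⁻¹ * ∑ ℓ ∈ idx N, |h ℓ|) := by rw [← Finset.mul_sum]; ring

end Stmt13
namespace Stmt13

/-- One test-function step for the dual-norm lower bound. -/
lemma half_step {N : ℕ} (hN0 : 0 < N) (T : (ℤ → ℝ) →ₗ[ℝ] ℝ) (g : ℤ → ℝ)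
    (key : ∀ v ∈ uSet N, iprod N g (bD N v) = T v)
    (hbdd : BddAbove {r : ℝ | ∃ v ∈ uSet N, nl1 N (bD N v) = 1 ∧ r = T v})
    {a b : ℤ} (ha : a ∈ idx N) (hb : b ∈ idx N) (hab : a < b) (δ : ℝ) (hδ : |δ| = 1/2) :
    δ * (g a - g b) ≤ dualNorm N ⇑T := by
  have hv₀mem : vtest N a b δ ∈ uSet N := vtest_mem hN0 ha hb hab δ
  have hnl1 : nl1 N (bD N (vtest N a b δ)) = 1 := by
    rw [nl1_bD_vtest hN0 ha hb hab, hδ]; norm_num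
  have hTv : T (vtest N a b δ) = δ * (g a - g b) := by
    rw [← key _ hv₀mem, iprod_bD_vtest hN0 ha hb hab δ g]
  rw [← hTv, dualNorm]
  exact le_csSup hbdd ⟨vtest N a b δ, hv₀mem, hnl1, rfl⟩

end Stmt13

open Stmt13

theorem stmt13 (N : ℕ) (hN : 2 ≤ N) (T : (ℤ → ℝ) →ₗ[ℝ] ℝ) :
    ∃ u ∈ uSet N,
      (∀ v ∈ uSet N, iprod N (bD N u) (bD N v) = T v)
      ∧ (∀ u' ∈ uSet N, (∀ v ∈ uSet N, iprod N (bD N u') (bD N v) = T v) → u' = u)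
      ∧ nlinf N (bD N u) ≤ 2 * dualNorm N ⇑T := by
  have hN0 : 0 < N := by omega
  haveI := uSub_fd N hN0
  set B := (gForm N).restrict (uSub N) with hBdef
  have hB : B.Nondegenerate := gForm_nondeg N hN0
  set T' : Module.Dual ℝ ↥(uSub N) := T.comp (uSub N).subtype with hT'def
  set u₀ : ↥(uSub N) := (B.toDual hB).symm T' with hu₀def
  have key0 : ∀ v : ↥(uSub N), iprod N (bD N (u₀:ℤ→ℝ)) (bD N (v:ℤ→ℝ)) = T (v:ℤ→ℝ) := by
    intro v
    have h := LinearMap.BilinForm.apply_toDual_symm_apply (B := B) (hB := hB) T' v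
    rw [← hu₀def] at h
    rw [show B u₀ v = iprod N (bD N (u₀:ℤ→ℝ)) (bD N (v:ℤ→ℝ)) from rfl] at h
    exact h
  have key : ∀ v ∈ uSet N, iprod N (bD N (u₀:ℤ→ℝ)) (bD N v) = T v :=
    fun v hv => key0 ⟨v, hv⟩
  refine ⟨(u₀:ℤ→ℝ), u₀.2, key, ?_, ?_⟩
  · -- uniqueness
    intro u' hu' hprop
    have hsub : (⟨u', hu'⟩ : ↥(uSub N)) = u₀ := by
      rw [← sub_eq_zero]
      apply hB.1
      intro v
      have h1 := hprop (v:ℤ→ℝ) v.2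
      have h2 := key0 v
      have hB1 : B ((⟨u', hu'⟩ : ↥(uSub N)) - u₀) v
          = B (⟨u', hu'⟩ : ↥(uSub N)) v - B u₀ v := by
        rw [map_sub, LinearMap.sub_apply]
      rw [hB1,
        show B (⟨u', hu'⟩ : ↥(uSub N)) v = iprod N (bD N u') (bD N (v:ℤ→ℝ)) from rfl,
        show B u₀ v = iprod N (bD N (u₀:ℤ→ℝ)) (bD N (v:ℤ→ℝ)) from rfl,
        h1, h2, sub_self]
    exact congrArg Subtype.val hsub
  · -- norm bound
    set g : ℤ → ℝ := bD N (u₀:ℤ→ℝ) with hgdef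
    obtain ⟨ℓ₀, hℓ₀, hmax, hMeq⟩ := exists_nlinf_max hN0 g
    set M : ℝ := |g ℓ₀| with hMdef
    have hMnn : 0 ≤ M := abs_nonneg _
    set s : ℝ := if 0 ≤ g ℓ₀ then 1 else -1 with hsdef
    have hsg : s * g ℓ₀ = M := by
      rw [hsdef, hMdef]
      split_ifs with h
      · rw [abs_of_nonneg h]; ring
      · rw [abs_of_neg (lt_of_not_ge h)]; ring
    have hsabs : |s| = 1 := by
      rw [hsdef]; split_ifs <;> simp
    have hgsum : ∑ ℓ ∈ idx N, g ℓ = 0 := sum_bD_eq_zero hN0 u₀.2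
    have hbdd : BddAbove {r : ℝ | ∃ v ∈ uSet N, nl1 N (bD N v) = 1 ∧ r = T v} := by
      refine ⟨M, ?_⟩
      rintro r ⟨v, hv, hn, rfl⟩
      rw [← key v hv]
      have h := iprod_le_nlinf_mul hN0 g (bD N v) M hmax
      rw [hn, mul_one] at h
      exact h
    have hℓ₁ex : ∃ ℓ₁ ∈ idx N, ℓ₁ ≠ ℓ₀ ∧ s * g ℓ₁ ≤ 0 := by
      by_contra hcon
      push_neg at hcon
      set ℓ₂ : ℤ := if ℓ₀ = (N:ℤ) then (N:ℤ) - 1 else (N:ℤ) with hℓ₂def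
      have hmem2 : ℓ₂ ∈ idx N := by
        rw [hℓ₂def]; split_ifs <;> (simp only [idx, Finset.mem_Icc]; omega)
      have hne2 : ℓ₂ ≠ ℓ₀ := by
        rw [hℓ₂def]; split_ifs with h <;> omega
      have hpos2 := hcon ℓ₂ hmem2 hne2
      have hsum' : ∑ ℓ ∈ idx N, s * g ℓ = 0 := by
        rw [← Finset.mul_sum, hgsum, mul_zero]
      have hsplit : s * g ℓ₀ + ∑ ℓ ∈ (idx N).erase ℓ₀, s * g ℓ = ∑ ℓ ∈ idx N, s * g ℓ :=
        Finset.add_sum_erase _ (fun ℓ => s * g ℓ) hℓ₀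
      have hrest : s * g ℓ₂ ≤ ∑ ℓ ∈ (idx N).erase ℓ₀, s * g ℓ := by
        apply Finset.single_le_sum (f := fun ℓ => s * g ℓ)
          (fun i hi => le_of_lt (hcon i (Finset.mem_erase.mp hi).2 (Finset.mem_erase.mp hi).1))
          (Finset.mem_erase.mpr ⟨hne2, hmem2⟩)
      linarith
    obtain ⟨ℓ₁, hℓ₁mem, hℓ₁ne, hℓ₁le⟩ := hℓ₁ex
    have hdual : (s * g ℓ₀ - s * g ℓ₁) / 2 ≤ dualNorm N ⇑T := by
      rcases lt_or_gt_of_ne hℓ₁ne with hlt | hgt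
      · -- ℓ₁ < ℓ₀ : a = ℓ₁, b = ℓ₀, δ = -(s/2)
        have h := half_step hN0 T g key hbdd hℓ₁mem hℓ₀ hlt (-(s/2))
          (by rw [abs_neg, abs_div, hsabs]; norm_num)
        calc (s * g ℓ₀ - s * g ℓ₁) / 2 = -(s/2) * (g ℓ₁ - g ℓ₀) := by ring
          _ ≤ dualNorm N ⇑T := h
      · -- ℓ₀ < ℓ₁ : a = ℓ₀, b = ℓ₁, δ = s/2
        have h := half_step hN0 T g key hbdd hℓ₀ hℓ₁mem hgt (s/2)
          (by rw [abs_div, hsabs]; norm_num)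
        calc (s * g ℓ₀ - s * g ℓ₁) / 2 = (s/2) * (g ℓ₀ - g ℓ₁) := by ring
          _ ≤ dualNorm N ⇑T := h
    rw [hMeq]
    linarith
end
end

section
/- Let X and Y be Banach spaces, U an open subset of X, and F : U → Y Fréchet differentiable. Suppose x₀ ∈ U and η, σ, L > 0 satisfy: ‖F(x₀)‖_Y ≤ η; the derivative F'(x₀) is invertible with ‖F'(x₀)^{−1}‖_{L(Y,X)} ≤ σ^{−1}; the closed ball of radius 2ησ^{−1} centered at x₀ is contained in U; ‖F'(x₁) − F'(x₂)‖_{L(X,Y)} ≤ L ‖x₁ − x₂‖_X whenever ‖x₁ − x₀‖_X ≤ 2ησ^{−1} and ‖x₂ − x₀‖_X ≤ 2ησ^{−1}; and 2Lσ^{−2}η < 1. Then there exists x ∈ X such that F(x) = 0 and ‖x − x₀‖_X ≤ 2ησ^{−1}. -/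
open Set Metric

theorem stmt18 {X Y : Type*} [NormedAddCommGroup X] [NormedSpace ℝ X]
    [CompleteSpace X] [NormedAddCommGroup Y] [NormedSpace ℝ Y] [CompleteSpace Y]
    (Uo : Set X) (hUo : IsOpen Uo) (f : X → Y) (f' : X → X →L[ℝ] Y)
    (hdiff : ∀ x ∈ Uo, HasFDerivAt f (f' x) x)
    (x₀ : X) (hx₀ : x₀ ∈ Uo) (η σ L : ℝ) (hη : 0 < η) (hσ : 0 < σ) (hL : 0 < L)
    (hres : ‖f x₀‖ ≤ η)
    (hinv : ∃ B : Y →L[ℝ] X, (∀ y : Y, f' x₀ (B y) = y) ∧ (∀ x : X, B (f' x₀ x) = x)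
      ∧ ‖B‖ ≤ σ⁻¹)
    (hball : Metric.closedBall x₀ (2 * η * σ⁻¹) ⊆ Uo)
    (hLip : ∀ x₁ ∈ Metric.closedBall x₀ (2 * η * σ⁻¹),
      ∀ x₂ ∈ Metric.closedBall x₀ (2 * η * σ⁻¹), ‖f' x₁ - f' x₂‖ ≤ L * ‖x₁ - x₂‖)
    (hsmall : 2 * L * σ⁻¹ ^ 2 * η < 1) :
    ∃ x : X, f x = 0 ∧ ‖x - x₀‖ ≤ 2 * η * σ⁻¹ := by
  obtain ⟨B, hB1, hB2, hBn⟩ := hinv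
  have hσi : 0 < σ⁻¹ := inv_pos.2 hσ
  set r : ℝ := 2 * η * σ⁻¹ with hr
  have hrpos : 0 < r := by positivity
  set k : ℝ := 2 * L * σ⁻¹ ^ 2 * η with hk
  have hkpos : 0 < k := by positivity
  have hk1 : k < 1 := hsmall
  set s : Set X := Metric.closedBall x₀ r with hs
  set g : X → X := fun x => x - B (f x) with hgdef
  -- derivative of g on s
  set g' : X → X →L[ℝ] X := fun x => B.comp (f' x₀ - f' x) with hg'def
  have hgd : ∀ x ∈ s, HasFDerivAt g (g' x) x := by
    intro x hx
    have h1 : HasFDerivAt (fun x => B (f x)) (B.comp (f' x)) x :=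
      B.hasFDerivAt.comp x (hdiff x (hball hx))
    have h2 : HasFDerivAt g (ContinuousLinearMap.id ℝ X - B.comp (f' x)) x :=
      (hasFDerivAt_id x).sub h1
    convert h2 using 1
    ext v
    simp [hg'def, map_sub, hB2]
  have hg'norm : ∀ x ∈ s, ‖g' x‖ ≤ σ⁻¹ * (L * ‖x₀ - x‖) := by
    intro x hx
    calc ‖g' x‖ ≤ ‖B‖ * ‖f' x₀ - f' x‖ := B.opNorm_comp_le _
      _ ≤ σ⁻¹ * (L * ‖x₀ - x‖) := by
        apply mul_le_mul hBn (hLip x₀ (Metric.mem_closedBall_self hrpos.le) x hx)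
          (norm_nonneg _) hσi.le
  -- g is k-Lipschitz on s
  have hglip : ∀ x ∈ s, ∀ y ∈ s, ‖g x - g y‖ ≤ k * ‖x - y‖ := by
    intro x hx y hy
    have := (convex_closedBall x₀ r).norm_image_sub_le_of_norm_hasFDerivWithin_le
      (f := g) (f' := g') (C := k)
      (fun z hz => (hgd z hz).hasFDerivWithinAt)
      (fun z hz => by
        refine (hg'norm z hz).trans ?_
        have hz' : ‖x₀ - z‖ ≤ r := by
          rw [norm_sub_rev]; exact mem_closedBall_iff_norm.mp hz
        calc σ⁻¹ * (L * ‖x₀ - z‖) ≤ σ⁻¹ * (L * r) := by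
              gcongr
          _ = k := by rw [hk, hr]; ring)
      hy hx
    exact this
  -- quadratic estimate : ‖g x - g x₀‖ ≤ σ⁻¹ * L / 2 * ‖x - x₀‖ ^ 2
  have hquad : ∀ x ∈ s, ‖g x - g x₀‖ ≤ σ⁻¹ * L / 2 * ‖x - x₀‖ ^ 2 := by
    intro x hx
    set v : X := x - x₀ with hv
    set z : ℝ → X := fun t => x₀ + t • v with hz
    have hzmem : ∀ t ∈ Icc (0:ℝ) 1, z t ∈ s := by
      intro t ht
      simp only [hs, Metric.mem_closedBall, dist_eq_norm, hz]
      have : ‖x₀ + t • v - x₀‖ = |t| * ‖v‖ := by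
        simp [norm_smul]
      rw [this, abs_of_nonneg ht.1]
      have hvr : ‖v‖ ≤ r := by rw [hv]; exact mem_closedBall_iff_norm.mp hx
      calc t * ‖v‖ ≤ 1 * ‖v‖ := by gcongr; exact ht.2
        _ ≤ r := by simpa using hvr
    set c : ℝ := σ⁻¹ * L * ‖v‖ ^ 2 with hc
    set φ : ℝ → X := fun t => g (z t) - g (z 0) with hφ
    set φ' : ℝ → X := fun t => g' (z t) v with hφ'
    have hder : ∀ t ∈ Icc (0:ℝ) 1, HasDerivWithinAt φ (φ' t) (Icc (0:ℝ) 1) t := by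
      intro t ht
      have hz' : HasDerivWithinAt z v (Icc (0:ℝ) 1) t := by
        have : HasDerivAt (fun t : ℝ => x₀ + t • v) v t := by
          simpa using (hasDerivAt_id t).smul_const v |>.const_add x₀
        exact this.hasDerivWithinAt
      have hgz : HasFDerivAt g (g' (z t)) (z t) := hgd (z t) (hzmem t ht)
      exact ((hgz.comp_hasDerivWithinAt t hz').sub_const (g (z 0)))
    have hbound : ∀ t ∈ Ico (0:ℝ) 1, ‖φ' t‖ ≤ c * t := by
      intro t ht
      have ht' : t ∈ Icc (0:ℝ) 1 := ⟨ht.1, ht.2.le⟩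
      have h1 : ‖φ' t‖ ≤ ‖g' (z t)‖ * ‖v‖ := (g' (z t)).le_opNorm v
      have h2 : ‖g' (z t)‖ ≤ σ⁻¹ * (L * ‖x₀ - z t‖) := hg'norm _ (hzmem t ht')
      have h3 : ‖x₀ - z t‖ = t * ‖v‖ := by
        have : x₀ - z t = -(t • v) := by simp [hz]
        rw [this, norm_neg, norm_smul, Real.norm_eq_abs, abs_of_nonneg ht.1]
      calc ‖φ' t‖ ≤ σ⁻¹ * (L * (t * ‖v‖)) * ‖v‖ := by
            refine h1.trans ?_
            apply mul_le_mul_of_nonneg_right _ (norm_nonneg v)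
            rw [← h3]; exact h2
        _ = c * t := by rw [hc]; ring
    have key := image_norm_le_of_norm_deriv_right_le_deriv_boundary
      (f := φ) (f' := φ') (a := 0) (b := 1)
      (fun t ht => (hder t ht).continuousWithinAt)
      (fun t ht => (hder t ⟨ht.1, ht.2.le⟩).mono_of_mem_nhdsWithin
        (Icc_mem_nhdsGE_of_mem ht))
      (B := fun t => c / 2 * t ^ 2) (B' := fun t => c * t)
      (by simp [hφ])
      (fun t => by
        have : HasDerivAt (fun t : ℝ => c / 2 * t ^ 2) (c / 2 * (2 * t)) t := by
          simpa using ((hasDerivAt_pow 2 t).const_mul (c / 2))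
        convert this using 1; ring)
      hbound (right_mem_Icc.2 zero_le_one)
    have hz1 : z 1 = x := by simp [hz, hv]
    have hz0 : z 0 = x₀ := by simp [hz]
    simp only [hφ, hz1, hz0] at key
    calc ‖g x - g x₀‖ ≤ c / 2 * 1 ^ 2 := key
      _ = σ⁻¹ * L / 2 * ‖x - x₀‖ ^ 2 := by rw [hc, hv]; ring
  -- g maps s into s
  have hmaps : MapsTo g s s := by
    intro x hx
    have hxr : ‖x - x₀‖ ≤ r := mem_closedBall_iff_norm.mp hx
    have h0 : g x₀ - x₀ = -(B (f x₀)) := by simp [hgdef]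
    have h0' : ‖g x₀ - x₀‖ ≤ σ⁻¹ * η := by
      rw [h0, norm_neg]
      calc ‖B (f x₀)‖ ≤ ‖B‖ * ‖f x₀‖ := B.le_opNorm _
        _ ≤ σ⁻¹ * η := mul_le_mul hBn hres (norm_nonneg _) hσi.le
    have hq := hquad x hx
    have hq' : σ⁻¹ * L / 2 * ‖x - x₀‖ ^ 2 ≤ σ⁻¹ * η := by
      calc σ⁻¹ * L / 2 * ‖x - x₀‖ ^ 2 ≤ σ⁻¹ * L / 2 * r ^ 2 := by gcongr
        _ = k * (η * σ⁻¹) := by rw [hk, hr]; ring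
        _ ≤ 1 * (η * σ⁻¹) := mul_le_mul_of_nonneg_right hk1.le (by positivity)
        _ = σ⁻¹ * η := by ring
    simp only [hs, Metric.mem_closedBall, dist_eq_norm]
    have htri : g x - x₀ = (g x - g x₀) + (g x₀ - x₀) := by abel
    calc ‖g x - x₀‖ ≤ ‖g x - g x₀‖ + ‖g x₀ - x₀‖ := by
          rw [htri]; exact norm_add_le _ _
      _ ≤ σ⁻¹ * η + σ⁻¹ * η := add_le_add (hq.trans hq') h0'
      _ = r := by rw [hr]; ring
  -- contraction
  set K : NNReal := ⟨k, hkpos.le⟩ with hK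
  have hK1 : K < 1 := by
    rw [← NNReal.coe_lt_coe]; exact_mod_cast hk1
  have hlips : LipschitzOnWith K g s := by
    apply LipschitzOnWith.of_dist_le_mul
    intro x hx y hy
    rw [dist_eq_norm, dist_eq_norm]; exact hglip x hx y hy
  have hcontr : ContractingWith K (hmaps.restrict g s s) :=
    ⟨hK1, hlips.mapsToRestrict hmaps⟩
  have hsc : IsComplete s := (Metric.isClosed_closedBall).isComplete
  have hx₀s : x₀ ∈ s := Metric.mem_closedBall_self hrpos.le
  have hfin : edist x₀ (g x₀) ≠ ⊤ := edist_ne_top _ _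
  refine ⟨ContractingWith.efixedPoint' g hsc hmaps hcontr x₀ hx₀s hfin, ?_, ?_⟩
  · have hfix : Function.IsFixedPt g (ContractingWith.efixedPoint' g hsc hmaps hcontr x₀ hx₀s hfin) :=
      ContractingWith.efixedPoint_isFixedPt' hsc hmaps hcontr hx₀s hfin
    set xs := ContractingWith.efixedPoint' g hsc hmaps hcontr x₀ hx₀s hfin with hxs
    have hgx : xs - B (f xs) = xs := hfix
    have hB0 : B (f xs) = 0 := sub_eq_self.mp hgx
    have h1 := hB1 (f xs)
    rw [hB0, map_zero] at h1
    exact h1.symm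
  · have hmem : ContractingWith.efixedPoint' g hsc hmaps hcontr x₀ hx₀s hfin ∈ s :=
      ContractingWith.efixedPoint_mem' hsc hmaps hcontr hx₀s hfin
    exact mem_closedBall_iff_norm.mp hmem
end
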